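/- arXiv:1908.11182 — 4 statements merged into one kernel-verified Lean document; each statement's English description precedes it below -/
import Mathlib

section
/- Let A be a strictly positive operator on H and T ∈ B_A(H) with T² = 0. Then w_A(T) = (1/2)·√‖TT^{♯A} + T^{♯A}T‖_A. -/
noncomputable section
open Complex ContinuousLinearMap

variable {H : Type*} [NormedAddCommGroup H] [InnerProductSpace ℂ H] [CompleteSpace H]

/-- The `A`-inner product `⟨x,y⟩_A = ⟨Ax,y⟩`. -/
def innA (A : H →L[ℂ] H) (x y : H) : ℂ := inner ℂ (A x) y

/-- The `A`-seminorm of a vector, `‖x‖_A = √⟨x,x⟩_A`. -/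
def vnormA (A : H →L[ℂ] H) (x : H) : ℝ := Real.sqrt (innA A x x).re

/-- The `A`-numerical radius `w_A(T) = sup{|⟨Tx,x⟩_A| : ‖x‖_A = 1}`. -/
def wA (A T : H →L[ℂ] H) : ℝ :=
  sSup {r : ℝ | ∃ x : H, vnormA A x = 1 ∧ r = ‖innA A (T x) x‖}

/-- The `A`-operator seminorm, `sup` over `A`-unit vectors in the closure of the range of `A`. -/
def opNormA (A T : H →L[ℂ] H) : ℝ :=
  sSup {r : ℝ | ∃ x : H, x ∈ closure (Set.range A) ∧ vnormA A x = 1 ∧ r = vnormA A (T x)}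

/-- The `A`-operator seminorm, `sup` over all `A`-unit vectors (used when `A > 0`). -/
def opNormA' (A T : H →L[ℂ] H) : ℝ :=
  sSup {r : ℝ | ∃ x : H, vnormA A x = 1 ∧ r = vnormA A (T x)}

/-- The `A`-Crawford number `c_A(T) = inf{|⟨Tx,x⟩_A| : ‖x‖_A = 1}`. -/
def cA (A T : H →L[ℂ] H) : ℝ :=
  sInf {r : ℝ | ∃ x : H, vnormA A x = 1 ∧ r = ‖innA A (T x) x‖}

/-- The `A`-minimum modulus `m_A(T) = inf{‖Tx‖_A : ‖x‖_A = 1}` (version for `A > 0`). -/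
def mA (A T : H →L[ℂ] H) : ℝ :=
  sInf {r : ℝ | ∃ x : H, vnormA A x = 1 ∧ r = vnormA A (T x)}

/-- `S` is an `A`-adjoint of `T`, i.e. `A S = T* A`. -/
def IsAAdjoint (A T S : H →L[ℂ] H) : Prop :=
  A.comp S = (ContinuousLinearMap.adjoint T).comp A

/-- `A` is strictly positive: positive and `⟨Ax,x⟩ > 0` for all `x ≠ 0`. -/
def StrictPos (A : H →L[ℂ] H) : Prop :=
  A.IsPositive ∧ ∀ x : H, x ≠ 0 → 0 < (innA A x x).re

/-- The inner product on `H ⊕ H`. -/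
def inn2 (u v : H × H) : ℂ := inner ℂ u.1 v.1 + inner ℂ u.2 v.2

/-- `B = diag(A, A)` acting on `H ⊕ H`. -/
def Bop (A : H →L[ℂ] H) : H × H →L[ℂ] H × H := A.prodMap A

/-- The `B`-seminorm on `H ⊕ H`. -/
def vnormB (A : H →L[ℂ] H) (u : H × H) : ℝ := Real.sqrt (inn2 (Bop A u) u).re

/-- The `B`-numerical radius on `H ⊕ H`, where `B = diag(A, A)`. -/
def wB (A : H →L[ℂ] H) (S : H × H →L[ℂ] H × H) : ℝ :=
  sSup {r : ℝ | ∃ u : H × H, vnormB A u = 1 ∧ r = ‖inn2 (Bop A (S u)) u‖}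

/-- The `2 × 2` operator matrix `[[X, Y], [Z, W]]` acting on `H ⊕ H`. -/
def blk (X Y Z W : H →L[ℂ] H) : H × H →L[ℂ] H × H :=
  ((X.comp (ContinuousLinearMap.fst ℂ H H)) + (Y.comp (ContinuousLinearMap.snd ℂ H H))).prod
    ((Z.comp (ContinuousLinearMap.fst ℂ H H)) + (W.comp (ContinuousLinearMap.snd ℂ H H)))

section Abstract


variable {F : Type*} [NormedAddCommGroup F] [InnerProductSpace ℂ F]

local notation "⟪" x ", " y "⟫" => @inner ℂ _ _ x y

theorem inner_self_re_eq (v : F) : (⟪v, v⟫).re = ‖v‖ ^ 2 := by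
  have := @inner_self_eq_norm_sq ℂ _ _ _ _ v
  simpa using this

/-- Polarization bound: a selfadjoint map whose numerical values are bounded by `a`
has norm bounded by `a`. -/
theorem selfadj_norm_le (R : F →ₗ[ℂ] F) (hsa : ∀ y z : F, ⟪R y, z⟫ = ⟪y, R z⟫)
    (a : ℝ) (ha : 0 ≤ a) (hb : ∀ z : F, |Complex.re ⟪R z, z⟫| ≤ a * ‖z‖ ^ 2) (y : F) :
    ‖R y‖ ≤ a * ‖y‖ := by
  by_cases hRy : R y = 0
  · rw [hRy, norm_zero]; positivity
  have hy : y ≠ 0 := by rintro rfl; simp at hRy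
  have hRy' : (0:ℝ) < ‖R y‖ := norm_pos_iff.mpr hRy
  have hy' : (0:ℝ) < ‖y‖ := norm_pos_iff.mpr hy
  set t : ℝ := ‖y‖ / ‖R y‖ with ht
  have htpos : 0 < t := div_pos hy' hRy'
  set z : F := ((t : ℂ)) • R y with hz
  have hzn : ‖z‖ = ‖y‖ := by
    rw [hz, norm_smul]
    rw [Complex.norm_real, Real.norm_eq_abs, abs_of_pos htpos, ht]
    field_simp
  have key : ∀ u v : F, Complex.re ⟪R (u+v), u+v⟫ - Complex.re ⟪R (u-v), u-v⟫
      = 4 * Complex.re ⟪R u, v⟫ := by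
    intro u v
    have hvu : ⟪R v, u⟫ = (starRingEnd ℂ) ⟪R u, v⟫ := by
      rw [hsa v u, ← inner_conj_symm]
    have h1 : ⟪R (u+v), u+v⟫ = ⟪R u, u⟫ + ⟪R v, v⟫ + (⟪R u, v⟫ + (starRingEnd ℂ) ⟪R u, v⟫) := by
      rw [map_add, inner_add_left, inner_add_right, inner_add_right, hvu]; ring
    have h2 : ⟪R (u-v), u-v⟫ = ⟪R u, u⟫ + ⟪R v, v⟫ - (⟪R u, v⟫ + (starRingEnd ℂ) ⟪R u, v⟫) := by
      rw [map_sub, inner_sub_left, inner_sub_right, inner_sub_right, hvu]; ring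
    rw [h1, h2]
    simp only [Complex.add_re, Complex.sub_re, Complex.conj_re]
    ring
  have hre : Complex.re ⟪R y, z⟫ = ‖y‖ * ‖R y‖ := by
    rw [hz, inner_smul_right, Complex.re_ofReal_mul, inner_self_re_eq, ht]
    field_simp
  have h3 := key y z
  have h4 : 4 * (‖y‖ * ‖R y‖) ≤ a * ‖y+z‖^2 + a * ‖y-z‖^2 := by
    have b1 := (abs_le.mp (hb (y+z))).2
    have b2 := (abs_le.mp (hb (y-z))).1
    rw [hre] at h3
    linarith [b1, b2, h3]
  have h5 : ‖y+z‖^2 + ‖y-z‖^2 = 4 * ‖y‖^2 := by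
    have := parallelogram_law_with_norm ℂ y z
    nlinarith [this, hzn]
  have h6 : ‖y‖ * ‖R y‖ ≤ a * ‖y‖^2 := by nlinarith [h4, h5, ha, sq_nonneg (‖y+z‖ - ‖y-z‖)]
  nlinarith [h6, hy']

variable (T S : F →ₗ[ℂ] F)

theorem adj_symm (hadj : ∀ x y : F, ⟪T x, y⟫ = ⟪x, S y⟫) :
    ∀ x y : F, ⟪S x, y⟫ = ⟪x, T y⟫ := by
  intro x y
  rw [← inner_conj_symm, ← hadj, inner_conj_symm]

theorem S_sq_zero (hadj : ∀ x y : F, ⟪T x, y⟫ = ⟪x, S y⟫)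
    (hT2 : ∀ x : F, T (T x) = 0) (x : F) : S (S x) = 0 := by
  have h : ⟪S (S x), S (S x)⟫ = 0 := by
    rw [adj_symm T S hadj, adj_symm T S hadj, hT2, inner_zero_right]
  exact inner_self_eq_zero.mp h

/-- Pointwise upper bound: `(2|⟨Tx,x⟩|)² ≤ ‖(TS+ST)x‖` for unit `x`. -/
theorem pointwise_upper (hadj : ∀ x y : F, ⟪T x, y⟫ = ⟪x, S y⟫)
    (hT2 : ∀ x : F, T (T x) = 0) (x : F) (hx : ‖x‖ = 1) :
    (2 * ‖(⟪T x, x⟫ : ℂ)‖) ^ 2 ≤ ‖T (S x) + S (T x)‖ := by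
  set c : ℂ := ⟪T x, x⟫ with hc
  set u : ℂ := if c = 0 then 1 else c / (‖c‖ : ℂ) with hu
  have hu1 : ‖u‖ = 1 := by
    rw [hu]
    split_ifs with h
    · simp
    · rw [norm_div, Complex.norm_real, Real.norm_eq_abs, _root_.abs_of_nonneg (norm_nonneg c)]
      exact div_self (norm_ne_zero_iff.mpr h)
  have huu : u * (starRingEnd ℂ) u = 1 := by
    have := Complex.mul_conj u
    rw [this]
    norm_cast
    simp [Complex.normSq_eq_norm_sq, hu1]
  have hu2 : (starRingEnd ℂ) u * c = (‖c‖ : ℂ) := by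
    rw [hu]
    split_ifs with h
    · simp [h]
    · have hcne : ((‖c‖ : ℝ) : ℂ) ≠ 0 := by
        exact_mod_cast Complex.ofReal_ne_zero.mpr (norm_ne_zero_iff.mpr h)
      rw [map_div₀, Complex.conj_ofReal, div_mul_eq_mul_div, mul_comm, Complex.mul_conj,
        Complex.normSq_eq_norm_sq, Complex.ofReal_pow, sq, mul_div_assoc,
        div_self hcne, mul_one]
  set R : F →ₗ[ℂ] F := u • T + ((starRingEnd ℂ) u) • S with hR
  have hRapp : ∀ y : F, R y = u • T y + ((starRingEnd ℂ) u) • S y := fun y => rfl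
  have hRsa : ∀ y z : F, ⟪R y, z⟫ = ⟪y, R z⟫ := by
    intro y z
    rw [hRapp, hRapp, inner_add_left, inner_add_right, inner_smul_left, inner_smul_left,
      inner_smul_right, inner_smul_right, hadj, adj_symm T S hadj, Complex.conj_conj]
    ring
  have hR2 : ∀ y : F, R (R y) = T (S y) + S (T y) := by
    intro y
    rw [hRapp, hRapp y]
    simp only [map_add, map_smul, smul_add, smul_smul]
    rw [hT2, S_sq_zero T S hadj hT2]
    simp only [smul_zero, zero_add, add_zero]
    rw [huu, mul_comm ((starRingEnd ℂ) u) u, huu, one_smul, one_smul]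
    try exact add_comm _ _
  have hSx : (⟪S x, x⟫ : ℂ) = (starRingEnd ℂ) c := by
    rw [adj_symm T S hadj, ← inner_conj_symm, hc]
  have hRx : (⟪R x, x⟫ : ℂ) = 2 * (‖c‖ : ℂ) := by
    rw [hRapp, inner_add_left, inner_smul_left, inner_smul_left, Complex.conj_conj, hSx, ← hc,
      hu2]
    have : u * (starRingEnd ℂ) c = (starRingEnd ℂ) ((starRingEnd ℂ) u * c) := by
      rw [map_mul, Complex.conj_conj]
    rw [this, hu2, Complex.conj_ofReal]
    ring
  have h1 : 2 * ‖c‖ ≤ ‖R x‖ := by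
    have := norm_inner_le_norm (𝕜 := ℂ) (R x) x
    rw [hRx, hx, mul_one] at this
    calc 2 * ‖c‖ = ‖(2 * (‖c‖ : ℂ) : ℂ)‖ := by
          rw [norm_mul]
          simp [Complex.norm_real, _root_.abs_of_nonneg (norm_nonneg c)]
      _ ≤ ‖R x‖ := this
  have h2 : ‖R x‖ ^ 2 ≤ ‖T (S x) + S (T x)‖ := by
    have e1 : ‖R x‖ ^ 2 = (⟪x, R (R x)⟫ : ℂ).re := by
      rw [← inner_self_re_eq, hRsa]
    have e2 : (⟪x, R (R x)⟫ : ℂ).re ≤ ‖(⟪x, R (R x)⟫ : ℂ)‖ := Complex.re_le_norm _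
    have e3 : ‖(⟪x, R (R x)⟫ : ℂ)‖ ≤ ‖x‖ * ‖R (R x)‖ := norm_inner_le_norm _ _
    rw [hx, one_mul] at e3
    rw [← hR2]
    linarith
  calc (2 * ‖c‖) ^ 2 ≤ ‖R x‖ ^ 2 := by
        apply pow_le_pow_left₀ (by positivity) h1
    _ ≤ ‖T (S x) + S (T x)‖ := h2

/-- Pointwise lower bound. -/
theorem pointwise_lower (hadj : ∀ x y : F, ⟪T x, y⟫ = ⟪x, S y⟫)
    (hT2 : ∀ x : F, T (T x) = 0) (w : ℝ) (hw0 : 0 ≤ w)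
    (hw : ∀ z : F, ‖(⟪T z, z⟫ : ℂ)‖ ≤ w * ‖z‖ ^ 2) (x : F) (hx : ‖x‖ = 1) :
    ‖T (S x) + S (T x)‖ ≤ (2 * w) ^ 2 := by
  set R : F →ₗ[ℂ] F := T + S with hR
  have hRapp : ∀ y : F, R y = T y + S y := fun y => rfl
  have hRsa : ∀ y z : F, ⟪R y, z⟫ = ⟪y, R z⟫ := by
    intro y z
    rw [hRapp, hRapp, inner_add_left, inner_add_right, hadj, adj_symm T S hadj]
    try ring
  have hR2 : ∀ y : F, R (R y) = T (S y) + S (T y) := by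
    intro y
    rw [hRapp, hRapp y, map_add, map_add, hT2, S_sq_zero T S hadj hT2]
    rw [zero_add, add_zero]
    try exact add_comm _ _
  have hb : ∀ z : F, |Complex.re ⟪R z, z⟫| ≤ (2 * w) * ‖z‖ ^ 2 := by
    intro z
    have hSz : (⟪S z, z⟫ : ℂ) = (starRingEnd ℂ) ⟪T z, z⟫ := by
      rw [adj_symm T S hadj, ← inner_conj_symm]
    have : (⟪R z, z⟫ : ℂ).re = 2 * (⟪T z, z⟫ : ℂ).re := by
      rw [hRapp, inner_add_left, hSz, Complex.add_re, Complex.conj_re]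
      ring
    rw [this, abs_mul]
    have := Complex.abs_re_le_norm (⟪T z, z⟫ : ℂ)
    have h2 := hw z
    calc |(2:ℝ)| * |(⟪T z, z⟫ : ℂ).re| ≤ 2 * ‖(⟪T z, z⟫ : ℂ)‖ := by
          rw [_root_.abs_two]
          nlinarith [abs_nonneg ((⟪T z, z⟫ : ℂ).re)]
      _ ≤ 2 * (w * ‖z‖ ^ 2) := by linarith
      _ = (2 * w) * ‖z‖ ^ 2 := by ring
  have hkey := selfadj_norm_le R hRsa (2 * w) (by linarith) hb
  calc ‖T (S x) + S (T x)‖ = ‖R (R x)‖ := by rw [hR2]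
    _ ≤ (2 * w) * ‖R x‖ := hkey (R x)
    _ ≤ (2 * w) * ((2 * w) * ‖x‖) := by
        have := hkey x
        nlinarith [hkey x]
    _ = (2 * w) ^ 2 := by rw [hx]; ring

/-- The abstract form of the main theorem, over any complex inner product space. -/
theorem abstract_main (hadj : ∀ x y : F, ⟪T x, y⟫ = ⟪x, S y⟫)
    (hT2 : ∀ x : F, T (T x) = 0) :
    sSup {r : ℝ | ∃ x : F, ‖x‖ = 1 ∧ r = ‖(⟪T x, x⟫ : ℂ)‖} =
      (1/2) * Real.sqrt (sSup {r : ℝ | ∃ x : F, ‖x‖ = 1 ∧ r = ‖T (S x) + S (T x)‖}) := by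
  set P : Set ℝ := {r : ℝ | ∃ x : F, ‖x‖ = 1 ∧ r = ‖(⟪T x, x⟫ : ℂ)‖} with hP
  set Q : Set ℝ := {r : ℝ | ∃ x : F, ‖x‖ = 1 ∧ r = ‖T (S x) + S (T x)‖} with hQ
  by_cases hbdd : BddAbove P
  · by_cases hne : P.Nonempty
    · obtain ⟨r0, x0, hx0, hr0⟩ := hne
      set w : ℝ := sSup P with hwdef
      have hw0 : 0 ≤ w := by
        have h1 : r0 ≤ w := le_csSup hbdd ⟨x0, hx0, hr0⟩
        have h2 : 0 ≤ r0 := hr0 ▸ norm_nonneg _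
        linarith
      have hwall : ∀ z : F, ‖(⟪T z, z⟫ : ℂ)‖ ≤ w * ‖z‖ ^ 2 := by
        intro z
        by_cases hz : z = 0
        · simp [hz]
        · have hzn : (0:ℝ) < ‖z‖ := norm_pos_iff.mpr hz
          set x : F := ((‖z‖⁻¹ : ℝ) : ℂ) • z with hx
          have hxn : ‖x‖ = 1 := by
            rw [hx, norm_smul, Complex.norm_real, Real.norm_eq_abs,
              abs_of_pos (inv_pos.mpr hzn), inv_mul_cancel₀ (ne_of_gt hzn)]
          have hmem : ‖(⟪T x, x⟫ : ℂ)‖ ∈ P := ⟨x, hxn, rfl⟩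
          have hle : ‖(⟪T x, x⟫ : ℂ)‖ ≤ w := le_csSup hbdd hmem
          have hinner : (⟪T x, x⟫ : ℂ) = ((‖z‖⁻¹ ^ 2 : ℝ) : ℂ) * ⟪T z, z⟫ := by
            rw [hx, map_smul, inner_smul_left, inner_smul_right, Complex.conj_ofReal]
            push_cast
            ring
          rw [hinner] at hle
          rw [norm_mul, Complex.norm_real, Real.norm_eq_abs,
            abs_of_pos (pow_pos (inv_pos.mpr hzn) 2)] at hle
          have : ‖(⟪T z, z⟫ : ℂ)‖ = ‖z‖^2 * (‖z‖⁻¹^2 * ‖(⟪T z, z⟫ : ℂ)‖) := by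
            field_simp
          rw [this]
          calc ‖z‖^2 * (‖z‖⁻¹^2 * ‖(⟪T z, z⟫ : ℂ)‖) ≤ ‖z‖^2 * w := by
                apply mul_le_mul_of_nonneg_left hle (by positivity)
            _ = w * ‖z‖^2 := by ring
      have hQbound : ∀ q ∈ Q, q ≤ (2*w)^2 := by
        rintro q ⟨x, hx, rfl⟩
        exact pointwise_lower T S hadj hT2 w hw0 hwall x hx
      have hQbdd : BddAbove Q := ⟨(2*w)^2, fun q hq => hQbound q hq⟩
      have hQne : Q.Nonempty := ⟨‖T (S x0) + S (T x0)‖, x0, hx0, rfl⟩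
      have hQle : sSup Q ≤ (2*w)^2 := csSup_le hQne hQbound
      have hQ0 : 0 ≤ sSup Q := by
        obtain ⟨q, x, hx, hq⟩ := hQne
        have := le_csSup hQbdd (⟨x, hx, hq⟩ : q ∈ Q)
        have : 0 ≤ q := hq ▸ norm_nonneg _
        linarith [le_csSup hQbdd (show q ∈ Q from ⟨x, hx, hq⟩)]
      have dir1 : w ≤ (1/2) * Real.sqrt (sSup Q) := by
        apply csSup_le (⟨r0, x0, hx0, hr0⟩ : P.Nonempty)
        rintro r ⟨x, hx, rfl⟩
        have h1 := pointwise_upper T S hadj hT2 x hx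
        have h2 : ‖T (S x) + S (T x)‖ ≤ sSup Q := le_csSup hQbdd ⟨x, hx, rfl⟩
        have h3 : (2 * ‖(⟪T x, x⟫ : ℂ)‖)^2 ≤ sSup Q := le_trans h1 h2
        have h4 : 2 * ‖(⟪T x, x⟫ : ℂ)‖ ≤ Real.sqrt (sSup Q) := by
          have h5 := Real.sqrt_le_sqrt h3
          rwa [Real.sqrt_sq (by positivity)] at h5
        linarith
      have dir2 : (1/2) * Real.sqrt (sSup Q) ≤ w := by
        have h1 : Real.sqrt (sSup Q) ≤ Real.sqrt ((2*w)^2) := Real.sqrt_le_sqrt hQle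
        rw [Real.sqrt_sq (by linarith)] at h1
        linarith
      linarith
    · have hPempty : P = ∅ := Set.not_nonempty_iff_eq_empty.mp hne
      have hQempty : Q = ∅ := by
        rw [Set.eq_empty_iff_forall_notMem]
        rintro q ⟨x, hx, hq⟩
        exact (Set.eq_empty_iff_forall_notMem.mp hPempty) ‖(⟪T x, x⟫ : ℂ)‖ ⟨x, hx, rfl⟩
      rw [hPempty, hQempty, Real.sSup_empty, Real.sqrt_zero]
      ring
  · have hQnb : ¬ BddAbove Q := by
      intro ⟨M, hM⟩
      apply hbdd
      refine ⟨Real.sqrt M / 2, ?_⟩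
      rintro r ⟨x, hx, rfl⟩
      have h1 := pointwise_upper T S hadj hT2 x hx
      have h2 : ‖T (S x) + S (T x)‖ ≤ M := hM ⟨x, hx, rfl⟩
      have h3 : (2 * ‖(⟪T x, x⟫ : ℂ)‖)^2 ≤ M := le_trans h1 h2
      have h4 : 2 * ‖(⟪T x, x⟫ : ℂ)‖ ≤ Real.sqrt M := by
        have h5 := Real.sqrt_le_sqrt h3
        rwa [Real.sqrt_sq (by positivity)] at h5
      linarith
    rw [Real.sSup_of_not_bddAbove hbdd, Real.sSup_of_not_bddAbove hQnb, Real.sqrt_zero]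
    ring

end Abstract

/-- Type synonym carrying the `A`-inner product structure. -/
def HsA (A : H →L[ℂ] H) (_hA : StrictPos A) : Type _ := H

instance (A : H →L[ℂ] H) (hA : StrictPos A) : AddCommGroup (HsA A hA) :=
  inferInstanceAs (AddCommGroup H)

instance (A : H →L[ℂ] H) (hA : StrictPos A) : Module ℂ (HsA A hA) :=
  inferInstanceAs (Module ℂ H)

theorem StrictPos.sym {A : H →L[ℂ] H} (hA : StrictPos A) (x y : H) :
    (inner ℂ (A x) y : ℂ) = inner ℂ x (A y) := by
  exact hA.1.1 x y

def coreA (A : H →L[ℂ] H) (hA : StrictPos A) : InnerProductSpace.Core ℂ (HsA A hA) where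
  inner x y := innA A x y
  conj_inner_symm x y := by
    exact (show ∀ x y : H, (starRingEnd ℂ) (innA A y x) = innA A x y from fun x y => by
      rw [innA, innA, inner_conj_symm, hA.sym]) x y
  re_inner_nonneg x := hA.1.2 x
  add_left x y z := by
    exact (show ∀ x y z : H, innA A (x + y) z = innA A x z + innA A y z from fun x y z => by
      rw [innA, innA, innA, map_add, inner_add_left]) x y z
  smul_left x y r := by
    exact (show ∀ x y : H, innA A (r • x) y = (starRingEnd ℂ) r * innA A x y from fun x y => by
      rw [innA, innA, map_smul, inner_smul_left]) x y
  definite x hx := by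
    by_contra hne
    have := hA.2 x hne
    rw [show innA A x x = (0:ℂ) from hx] at this
    simp at this

noncomputable instance (A : H →L[ℂ] H) (hA : StrictPos A) : NormedAddCommGroup (HsA A hA) :=
  @InnerProductSpace.Core.toNormedAddCommGroup ℂ (HsA A hA) _ _ _ (coreA A hA)

noncomputable instance (A : H →L[ℂ] H) (hA : StrictPos A) : InnerProductSpace ℂ (HsA A hA) :=
  InnerProductSpace.ofCore (coreA A hA).toCore

theorem HsA_inner (A : H →L[ℂ] H) (hA : StrictPos A) (x y : HsA A hA) :
    (inner ℂ x y : ℂ) = innA A x y := rfl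

theorem HsA_norm (A : H →L[ℂ] H) (hA : StrictPos A) (x : HsA A hA) :
    ‖x‖ = vnormA A x := by
  rfl

/-- View a continuous linear map on `H` as a linear map on the synonym. -/
def toHsMap (A : H →L[ℂ] H) (hA : StrictPos A) (T : H →L[ℂ] H) :
    HsA A hA →ₗ[ℂ] HsA A hA where
  toFun x := T x
  map_add' x y := T.map_add x y
  map_smul' c x := T.map_smul c x


theorem stmt14 (A T S : H →L[ℂ] H) (hA : StrictPos A) (hS : IsAAdjoint A T S)
    (hT2 : T^2 = 0) :
    wA A T = (1/2) * Real.sqrt (opNormA' A (T * S + S * T)) := by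
  have hadjH : ∀ x y : H, innA A (T x) y = innA A x (S y) := by
    intro x y
    have h1 : A (S y) = (ContinuousLinearMap.adjoint T) (A y) := by
      have h := congrArg (fun (f : H →L[ℂ] H) => f y) hS
      simpa [ContinuousLinearMap.comp_apply] using h
    rw [innA, innA]
    calc (inner ℂ (A (T x)) y : ℂ) = inner ℂ (T x) (A y) := hA.sym (T x) y
      _ = inner ℂ x ((ContinuousLinearMap.adjoint T) (A y)) :=
          (ContinuousLinearMap.adjoint_inner_right T x (A y)).symm
      _ = inner ℂ x (A (S y)) := by rw [← h1]
      _ = inner ℂ (A x) (S y) := (hA.sym x (S y)).symm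
  have hT2' : ∀ x : H, T (T x) = 0 := by
    intro x
    have h := ContinuousLinearMap.ext_iff.1 hT2 x
    rwa [pow_two, ContinuousLinearMap.mul_apply, ContinuousLinearMap.zero_apply] at h
  have hadj' : ∀ x y : HsA A hA,
      (inner ℂ ((toHsMap A hA T) x) y : ℂ) = inner ℂ x ((toHsMap A hA S) y) := fun x y => hadjH x y
  have hT2'' : ∀ x : HsA A hA, (toHsMap A hA T) ((toHsMap A hA T) x) = 0 := fun x => hT2' x
  have key := abstract_main (toHsMap A hA T) (toHsMap A hA S) hadj' hT2''
  have set1 : {r : ℝ | ∃ x : H, vnormA A x = 1 ∧ r = ‖innA A (T x) x‖}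
      = {r : ℝ | ∃ x : HsA A hA, ‖x‖ = 1 ∧
          r = ‖(inner ℂ ((toHsMap A hA T) x) x : ℂ)‖} := by
    ext r
    constructor
    · rintro ⟨x, h1, h2⟩
      exact ⟨x, h1, h2.trans rfl⟩
    · rintro ⟨x, h1, h2⟩
      exact ⟨x, h1,
        h2.trans rfl⟩
  have happ : ∀ x : HsA A hA,
      ((toHsMap A hA T) ((toHsMap A hA S) x) + (toHsMap A hA S) ((toHsMap A hA T) x) : HsA A hA)
        = ((T * S + S * T) x : H) := by
    intro x
    show (T (S x) + S (T x) : H) = _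
    rfl
  have set2 : {r : ℝ | ∃ x : H, vnormA A x = 1 ∧ r = vnormA A ((T * S + S * T) x)}
      = {r : ℝ | ∃ x : HsA A hA, ‖x‖ = 1 ∧
          r = ‖(toHsMap A hA T) ((toHsMap A hA S) x) + (toHsMap A hA S) ((toHsMap A hA T) x)‖} := by
    ext r
    constructor
    · rintro ⟨x, h1, h2⟩
      refine ⟨x, h1, ?_⟩
      exact h2.trans rfl
    · rintro ⟨x, h1, h2⟩
      refine ⟨x, h1, ?_⟩
      exact h2.trans rfl
  rw [wA, opNormA', set1, set2]
  exact key
end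
end

section
/- Let A be a strictly positive operator on H, T ∈ B_A(H), and P = T^{♯A}T + TT^{♯A}. Then w_A(T)⁴ ≥ (1/4)C_A(T²)² + (1/8)c_A(T²P + PT²) + (1/16)‖P‖_A², where C_A(S) = inf_{‖x‖_A=1} inf_{φ∈ℝ} ‖Re_A(e^{iφ}S)x‖_A and c_A(S) = inf{|⟨Sx,x⟩_A| : ‖x‖_A = 1}. -/
noncomputable section
set_option linter.unusedSectionVars false
set_option linter.unusedVariables false
set_option maxHeartbeats 1000000
open Complex ContinuousLinearMap

variable {H : Type*} [NormedAddCommGroup H] [InnerProductSpace ℂ H] [CompleteSpace H]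

lemma innA_conj {A : H →L[ℂ] H} (hA : ContinuousLinearMap.adjoint A = A) (x y : H) :
    innA A y x = starRingEnd ℂ (innA A x y) := by
  unfold innA
  rw [← inner_conj_symm, ← ContinuousLinearMap.adjoint_inner_left, hA]

lemma innA_add_left (A : H →L[ℂ] H) (x y z : H) : innA A (x + y) z = innA A x z + innA A y z := by
  simp [innA, inner_add_left]

lemma innA_add_right (A : H →L[ℂ] H) (x y z : H) : innA A x (y + z) = innA A x y + innA A x z := by
  simp [innA, inner_add_right]

lemma innA_smul_left (A : H →L[ℂ] H) (c : ℂ) (x y : H) : innA A (c • x) y = starRingEnd ℂ c * innA A x y := by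
  simp [innA, inner_smul_left]; ring

lemma innA_smul_right (A : H →L[ℂ] H) (c : ℂ) (x y : H) : innA A x (c • y) = c * innA A x y := by
  simp [innA, inner_smul_right]

lemma innA_nonneg {A : H →L[ℂ] H} (hP : A.IsPositive) (x : H) : 0 ≤ (innA A x x).re := by
  have := hP.re_inner_nonneg_left x; exact this

section main
variable {A T S : H →L[ℂ] H}

/-- move `T` from left slot to `S` in right slot -/
lemma innA_move_T (hA : ContinuousLinearMap.adjoint A = A)
    (hS : A.comp S = (ContinuousLinearMap.adjoint T).comp A) (x y : H) :
    innA A (T x) y = innA A x (S y) := by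
  have h : (ContinuousLinearMap.adjoint S).comp A = A.comp T := by
    have := congrArg ContinuousLinearMap.adjoint hS
    rw [ContinuousLinearMap.adjoint_comp, ContinuousLinearMap.adjoint_comp, hA,
      ContinuousLinearMap.adjoint_adjoint] at this
    exact this
  have h' : ContinuousLinearMap.adjoint S (A x) = A (T x) := by
    have := ContinuousLinearMap.ext_iff.mp h x
    simpa using this
  unfold innA
  rw [← h', ContinuousLinearMap.adjoint_inner_left]

lemma innA_move_S (hA : ContinuousLinearMap.adjoint A = A)
    (hS : A.comp S = (ContinuousLinearMap.adjoint T).comp A) (x y : H) :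
    innA A (S x) y = innA A x (T y) := by
  rw [innA_conj hA, ← innA_move_T hA hS, ← innA_conj hA]

/-- expansion of the `A`-squared-norm of a sum -/
lemma innA_expand (hA : ContinuousLinearMap.adjoint A = A) (u v : H) :
    (innA A (u + v) (u + v)).re
      = (innA A u u).re + (innA A v v).re + 2 * (innA A u v).re := by
  rw [innA_add_left, innA_add_right, innA_add_right, innA_conj hA v u]
  simp [Complex.add_re, Complex.conj_re]
  ring

/-- Cauchy–Schwarz for the semi-inner product -/
lemma innA_cs (hP : A.IsPositive) (x y : H) :
    ‖innA A x y‖ ^ 2 ≤ (innA A x x).re * (innA A y y).re := by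
  have hA : ContinuousLinearMap.adjoint A = A := hP.isSelfAdjoint.adjoint_eq
  set z := innA A x y with hz
  set az := ‖z‖ with haz
  have haz0 : 0 ≤ az := norm_nonneg z
  have quad : ∀ t : ℝ, 0 ≤ (innA A x x).re + 2 * t * az ^ 2 + t ^ 2 * az ^ 2 * (innA A y y).re := by
    intro t
    have h1 := innA_nonneg hP (x + ((t : ℂ) * starRingEnd ℂ z) • y)
    rw [innA_expand hA] at h1
    have h2 : innA A x (((t : ℂ) * starRingEnd ℂ z) • y) = (t : ℂ) * (starRingEnd ℂ z * z) := by
      rw [innA_smul_right]; ring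
    have key : ((t : ℂ) * z) * ((t : ℂ) * starRingEnd ℂ z) = ((t ^ 2 * az ^ 2 : ℝ) : ℂ) := by
      rw [show ((t : ℂ) * z) * ((t : ℂ) * starRingEnd ℂ z)
          = ((t : ℂ) * (t : ℂ)) * (z * starRingEnd ℂ z) from by ring, Complex.mul_conj]
      rw [haz, Complex.sq_norm]
      push_cast
      ring
    have h3 : (innA A (((t : ℂ) * starRingEnd ℂ z) • y) (((t : ℂ) * starRingEnd ℂ z) • y)).re
        = t ^ 2 * az ^ 2 * (innA A y y).re := by
      rw [innA_smul_right, innA_smul_left]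
      rw [map_mul, Complex.conj_conj, Complex.conj_ofReal]
      rw [show ((t:ℂ) * starRingEnd ℂ z * ((t:ℂ) * z * innA A y y))
          = (((t : ℂ) * z) * ((t : ℂ) * starRingEnd ℂ z)) * innA A y y from by ring, key]
      rw [Complex.re_ofReal_mul]
    have h4 : (innA A x (((t : ℂ) * starRingEnd ℂ z) • y)).re = t * az ^ 2 := by
      rw [h2]
      have : starRingEnd ℂ z * z = ((az ^ 2 : ℝ) : ℂ) := by
        rw [haz, Complex.sq_norm, ← Complex.normSq_eq_conj_mul_self]
      rw [this, ← Complex.ofReal_mul, Complex.ofReal_re]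
    rw [h3, h4] at h1
    linarith
  by_cases hy : (innA A y y).re = 0
  · -- show az = 0
    have haz' : az = 0 := by
      by_contra h
      have hpos : 0 < az ^ 2 := by positivity
      set t : ℝ := -(((innA A x x).re + 1) / (2 * az ^ 2)) with ht
      have hq := quad t
      have e1 : 2 * t * az ^ 2 = -((innA A x x).re + 1) := by
        rw [ht]; field_simp
      rw [hy, e1] at hq
      nlinarith
    rw [haz', hy]
    simp
  · have hy' : 0 < (innA A y y).re := lt_of_le_of_ne (innA_nonneg hP y) (Ne.symm hy)
    set ny := (innA A y y).re with hny
    have hq := quad (-(1 / ny))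
    have e1 : 2 * (-(1 / ny)) * az ^ 2 + (-(1 / ny)) ^ 2 * az ^ 2 * ny = -(az ^ 2 / ny) := by
      field_simp
      ring
    have h' : 0 ≤ (innA A x x).re + -(az ^ 2 / ny) := by rw [← e1]; linarith
    have h'' : az ^ 2 / ny ≤ (innA A x x).re := by linarith
    rw [div_le_iff₀ hy'] at h''
    linarith
end main

section abound
variable {A T S : H →L[ℂ] H}

lemma innA_move_one (hA : ContinuousLinearMap.adjoint A = A)
    (hS : A.comp S = (ContinuousLinearMap.adjoint T).comp A) (u v : H) :
    innA A ((S * T) u) v = innA A u ((S * T) v) := by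
  have e : ∀ w : H, (S * T) w = S (T w) := fun w => rfl
  rw [e, e, innA_move_S hA hS, innA_move_T hA hS]

lemma innA_move_R (hA : ContinuousLinearMap.adjoint A = A)
    (hS : A.comp S = (ContinuousLinearMap.adjoint T).comp A) :
    ∀ (n : ℕ) (u v : H), innA A (((S * T) ^ n) u) v = innA A u (((S * T) ^ n) v) := by
  intro n
  induction n with
  | zero => intro u v; simp
  | succ k ih =>
    intro u v
    have e1 : ((S * T) ^ (k + 1)) u = ((S * T) ^ k) ((S * T) u) := by
      rw [pow_succ, ContinuousLinearMap.mul_apply]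
    have e2 : ((S * T) ^ (k + 1)) v = (S * T) (((S * T) ^ k) v) := by
      rw [pow_succ', ContinuousLinearMap.mul_apply]
    rw [e1, e2, ih, ← innA_move_one hA hS]
end abound

section abound2
variable {A T S : H →L[ℂ] H}

lemma innA_abound (hP : A.IsPositive)
    (hS : A.comp S = (ContinuousLinearMap.adjoint T).comp A) (x : H) :
    (innA A (T x) (T x)).re ≤ ‖S * T‖ * (innA A x x).re := by
  have hA : ContinuousLinearMap.adjoint A = A := hP.isSelfAdjoint.adjoint_eq
  set R := S * T with hR
  set ν := (innA A x x).re with hν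
  have hν0 : 0 ≤ ν := innA_nonneg hP x
  set q := ‖R‖ with hq
  have hq0 : 0 ≤ q := norm_nonneg R
  set M := ‖A x‖ * ‖x‖ with hM
  have hM0 : 0 ≤ M := mul_nonneg (norm_nonneg _) (norm_nonneg _)
  set c : ℕ → ℝ := fun k => (innA A x ((R ^ (2 ^ k)) x)).re with hc
  have hsplit : ∀ k, (R ^ (2 ^ (k + 1))) x = (R ^ (2 ^ k)) ((R ^ (2 ^ k)) x) := by
    intro k
    rw [show (2 : ℕ) ^ (k + 1) = 2 ^ k + 2 ^ k by ring, pow_add,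
      ContinuousLinearMap.mul_apply]
  have hck : ∀ k, c (k + 1) = (innA A ((R ^ (2 ^ k)) x) ((R ^ (2 ^ k)) x)).re := by
    intro k
    simp only [hc]
    rw [hsplit, ← innA_move_R hA hS]
  have hc0 : c 0 = (innA A (T x) (T x)).re := by
    simp only [hc]
    rw [pow_zero, pow_one, innA_move_T hA hS]
    rfl
  have hcnn : ∀ k, 0 ≤ c k := by
    intro k
    cases k with
    | zero => rw [hc0]; exact innA_nonneg hP _
    | succ m => rw [hck]; exact innA_nonneg hP _
  have hcs : ∀ k, c k ^ 2 ≤ ν * c (k + 1) := by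
    intro k
    have h1 : c k ≤ ‖innA A x ((R ^ (2 ^ k)) x)‖ := Complex.re_le_norm _
    have h2 := innA_cs hP x ((R ^ (2 ^ k)) x)
    have h3 : c k ^ 2 ≤ ‖innA A x ((R ^ (2 ^ k)) x)‖ ^ 2 :=
      pow_le_pow_left₀ (hcnn k) h1 2
    rw [hck k]
    exact le_trans h3 h2
  have hbd : ∀ k, c k ≤ M * q ^ (2 ^ k) := by
    intro k
    have h1 : c k ≤ ‖innA A x ((R ^ (2 ^ k)) x)‖ := Complex.re_le_norm _
    have h2 : ‖innA A x ((R ^ (2 ^ k)) x)‖ ≤ ‖A x‖ * ‖(R ^ (2 ^ k)) x‖ := by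
      exact norm_inner_le_norm _ _
    have h3 : ‖(R ^ (2 ^ k)) x‖ ≤ q ^ (2 ^ k) * ‖x‖ := by
      calc ‖(R ^ (2 ^ k)) x‖ ≤ ‖R ^ (2 ^ k)‖ * ‖x‖ := ContinuousLinearMap.le_opNorm _ _
      _ ≤ q ^ (2 ^ k) * ‖x‖ := by
          have h4 : ‖R ^ (2 ^ k)‖ ≤ q ^ (2 ^ k) := norm_pow_le' R (by positivity)
          exact mul_le_mul_of_nonneg_right h4 (norm_nonneg _)
    calc c k ≤ ‖A x‖ * ‖(R ^ (2 ^ k)) x‖ := le_trans h1 h2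
    _ ≤ ‖A x‖ * (q ^ (2 ^ k) * ‖x‖) :=
        mul_le_mul_of_nonneg_left h3 (norm_nonneg _)
    _ = M * q ^ (2 ^ k) := by rw [hM]; ring
  have main : ∀ k, c 0 ^ (2 ^ k) ≤ c k * ν ^ (2 ^ k - 1) := by
    intro k
    induction k with
    | zero => simp
    | succ m ih =>
      have hn : 1 ≤ (2 : ℕ) ^ m := Nat.one_le_two_pow
      have e1 : c 0 ^ (2 ^ (m + 1)) = (c 0 ^ (2 ^ m)) ^ 2 := by
        rw [← pow_mul, show (2 : ℕ) ^ m * 2 = 2 ^ (m + 1) by ring]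
      have e2 : (c m * ν ^ (2 ^ m - 1)) ^ 2 = c m ^ 2 * ν ^ (2 ^ (m + 1) - 2) := by
        rw [mul_pow, ← pow_mul, show ((2:ℕ) ^ m - 1) * 2 = 2 ^ (m + 1) - 2 by
          rw [show (2:ℕ)^(m+1) = 2^m * 2 by ring]; omega]
      have e3 : ν * ν ^ (2 ^ (m + 1) - 2) = ν ^ (2 ^ (m + 1) - 1) := by
        rw [← pow_succ']
        congr 1
        have hn2 : 2 ≤ (2 : ℕ) ^ (m + 1) := by
          calc (2:ℕ) = 2^1 := rfl
          _ ≤ 2 ^ (m+1) := Nat.pow_le_pow_right (by norm_num) (by omega)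
        omega
      calc c 0 ^ (2 ^ (m + 1)) = (c 0 ^ (2 ^ m)) ^ 2 := e1
      _ ≤ (c m * ν ^ (2 ^ m - 1)) ^ 2 := pow_le_pow_left₀ (pow_nonneg (hcnn 0) _) ih 2
      _ = c m ^ 2 * ν ^ (2 ^ (m + 1) - 2) := e2
      _ ≤ (ν * c (m + 1)) * ν ^ (2 ^ (m + 1) - 2) :=
          mul_le_mul_of_nonneg_right (hcs m) (pow_nonneg hν0 _)
      _ = c (m + 1) * (ν * ν ^ (2 ^ (m + 1) - 2)) := by ring
      _ = c (m + 1) * ν ^ (2 ^ (m + 1) - 1) := by rw [e3]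
  -- conclude : c 0 ≤ q * ν
  have goal : c 0 ≤ q * ν := by
    by_contra hlt
    push_neg at hlt
    have hc0pos : 0 < c 0 := lt_of_le_of_lt (mul_nonneg hq0 hν0) hlt
    rcases eq_or_lt_of_le hν0 with hνz | hνpos
    · have h := hcs 0
      rw [← hνz] at h
      nlinarith
    · rcases eq_or_lt_of_le hq0 with hqz | hqpos
      · have h1 := main 1
        have h2 := hbd 1
        rw [← hqz] at h2
        norm_num at h2
        have h3 : c 1 = 0 := le_antisymm h2 (hcnn 1)
        rw [h3] at h1
        norm_num at h1
        nlinarith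
      · have hqν : 0 < q * ν := mul_pos hqpos hνpos
        set r := c 0 / (q * ν) with hr
        have hr1 : 1 < r := (one_lt_div hqν).2 hlt
        have key : ∀ k, r ^ (2 ^ k) ≤ M / ν := by
          intro k
          have h1 : c 0 ^ (2 ^ k) ≤ M * q ^ (2 ^ k) * ν ^ (2 ^ k - 1) :=
            le_trans (main k) (mul_le_mul_of_nonneg_right (hbd k) (pow_nonneg hν0 _))
          have h2 : c 0 ^ (2 ^ k) * ν ≤ M * (q * ν) ^ (2 ^ k) := by
            have e : q ^ (2 ^ k) * (ν ^ (2 ^ k - 1) * ν) = (q * ν) ^ (2 ^ k) := by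
              rw [← pow_succ, show (2:ℕ) ^ k - 1 + 1 = 2 ^ k by
                have : 1 ≤ (2:ℕ)^k := Nat.one_le_two_pow; omega, mul_pow]
            calc c 0 ^ (2 ^ k) * ν ≤ M * q ^ (2 ^ k) * ν ^ (2 ^ k - 1) * ν :=
                mul_le_mul_of_nonneg_right h1 hν0
            _ = M * (q ^ (2 ^ k) * (ν ^ (2 ^ k - 1) * ν)) := by ring
            _ = M * (q * ν) ^ (2 ^ k) := by rw [e]
          rw [hr, div_pow, div_le_div_iff₀ (by positivity) hνpos]
          calc c 0 ^ 2 ^ k * ν ≤ M * (q * ν) ^ 2 ^ k := h2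
          _ = M * (q * ν) ^ 2 ^ k := rfl
        obtain ⟨n, hn⟩ := pow_unbounded_of_one_lt (M / ν) hr1
        have h5 : r ^ n ≤ r ^ (2 ^ n) := pow_le_pow_right₀ hr1.le (Nat.lt_two_pow_self (n := n)).le
        linarith [key n]
  rw [← hc0]
  exact goal
end abound2

section polar
variable {A : H →L[ℂ] H}

lemma innA_sub_left (A : H →L[ℂ] H) (x y z : H) :
    innA A (x - y) z = innA A x z - innA A y z := by
  simp [innA, inner_sub_left]

lemma innA_sub_right (A : H →L[ℂ] H) (x y z : H) :
    innA A x (y - z) = innA A x y - innA A x z := by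
  simp [innA, inner_sub_right]

lemma innA_real_smul_self (hA : ContinuousLinearMap.adjoint A = A) (t : ℝ) (v : H) :
    (innA A ((t : ℂ) • v) ((t : ℂ) • v)).re = t ^ 2 * (innA A v v).re := by
  rw [innA_smul_right, innA_smul_left, Complex.conj_ofReal]
  rw [show ((t:ℂ) * ((t:ℂ) * innA A v v)) = ((t^2 : ℝ) : ℂ) * innA A v v from by
    push_cast; ring]
  rw [Complex.re_ofReal_mul]

lemma innA_selfadj_bound (hP : A.IsPositive) {G : H →L[ℂ] H}
    (hsa : ∀ u v, innA A (G u) v = innA A u (G v)) {w : ℝ} (hw0 : 0 ≤ w)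
    (hw : ∀ y, ‖innA A (G y) y‖ ≤ w * (innA A y y).re) (y : H) :
    (innA A (G y) (G y)).re ≤ w ^ 2 * (innA A y y).re := by
  have hA : ContinuousLinearMap.adjoint A = A := hP.isSelfAdjoint.adjoint_eq
  have step : ∀ u v, (innA A (G u) v).re
      ≤ w / 2 * ((innA A u u).re + (innA A v v).re) := by
    intro u v
    have hvu : (innA A (G v) u).re = (innA A (G u) v).re := by
      rw [hsa v u, innA_conj hA]
      exact Complex.conj_re _
    have e1 : (innA A (G (u + v)) (u + v)).re
        = (innA A (G u) u).re + (innA A (G v) v).re + 2 * (innA A (G u) v).re := by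
      rw [map_add, innA_add_left, innA_add_right, innA_add_right]
      simp only [Complex.add_re]
      rw [hvu]; ring
    have e2 : (innA A (G (u - v)) (u - v)).re
        = (innA A (G u) u).re + (innA A (G v) v).re - 2 * (innA A (G u) v).re := by
      rw [map_sub, innA_sub_left, innA_sub_right, innA_sub_right]
      simp only [Complex.sub_re]
      rw [hvu]; ring
    have par : (innA A (u + v) (u + v)).re + (innA A (u - v) (u - v)).re
        = 2 * (innA A u u).re + 2 * (innA A v v).re := by
      rw [innA_expand hA]
      rw [sub_eq_add_neg u v, innA_expand hA]
      have h1 : innA A u (-v) = - innA A u v := by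
        rw [show -v = ((-1 : ℂ)) • v from by simp, innA_smul_right]; ring
      have h2 : (innA A (-v) (-v)) = innA A v v := by
        rw [show -v = ((-1 : ℂ)) • v from by simp, innA_smul_right, innA_smul_left]
        simp
      rw [h1, h2]
      simp [Complex.neg_re]
      ring
    have b1 : (innA A (G (u + v)) (u + v)).re ≤ w * (innA A (u + v) (u + v)).re :=
      le_trans (Complex.re_le_norm _) (hw _)
    have b2 : -(innA A (G (u - v)) (u - v)).re ≤ w * (innA A (u - v) (u - v)).re := by
      have h6 := hw (u - v)
      have h3 : |(innA A (G (u - v)) (u - v)).re| ≤ ‖innA A (G (u-v)) (u-v)‖ :=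
        Complex.abs_re_le_norm _
      have h7 := abs_le.mp (le_trans h3 h6)
      linarith [h7.1]
    have hp : w * ((innA A (u + v) (u + v)).re + (innA A (u - v) (u - v)).re)
        = w * (2 * (innA A u u).re + 2 * (innA A v v).re) := by rw [par]
    have hp2 : w * ((innA A (u + v) (u + v)).re + (innA A (u - v) (u - v)).re)
        = w * (innA A (u + v) (u + v)).re + w * (innA A (u - v) (u - v)).re := by ring
    nlinarith [b1, b2, e1, e2, hp, hp2]
  have hν0 : 0 ≤ (innA A y y).re := innA_nonneg hP y
  by_cases hy0 : (innA A y y).re = 0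
  · have h1 : innA A (G y) (G y) = innA A y (G (G y)) := hsa y (G y)
    have h2 := innA_cs hP y (G (G y))
    rw [hy0] at h2
    have h3 : ‖innA A y (G (G y))‖ ^ 2 ≤ 0 := by simpa using h2
    have h4 : ‖innA A y (G (G y))‖ = 0 := by
      nlinarith [norm_nonneg (innA A y (G (G y)))]
    have h5 : (innA A (G y) (G y)).re ≤ 0 := by
      rw [h1]
      exact le_trans (Complex.re_le_norm _) (le_of_eq h4)
    rw [hy0]
    simpa using h5
  · have hy' : 0 < (innA A y y).re := lt_of_le_of_ne hν0 (Ne.symm hy0)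
    have hm2nn : 0 ≤ (innA A (G y) (G y)).re := innA_nonneg hP (G y)
    by_cases hm0 : (innA A (G y) (G y)).re = 0
    · rw [hm0]; positivity
    · have hm2pos : 0 < (innA A (G y) (G y)).re := lt_of_le_of_ne hm2nn (Ne.symm hm0)
      set m := Real.sqrt ((innA A (G y) (G y)).re) with hm
      have hmsq : m ^ 2 = (innA A (G y) (G y)).re := Real.sq_sqrt hm2nn
      have hmpos : 0 < m := Real.sqrt_pos.2 hm2pos
      set sν := Real.sqrt ((innA A y y).re) with hsν
      have hsνsq : sν ^ 2 = (innA A y y).re := Real.sq_sqrt hν0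
      have hsνpos : 0 < sν := Real.sqrt_pos.2 hy'
      set t := sν / m with ht
      have hstep := step y ((t : ℂ) • (G y))
      have ea : (innA A (G y) ((t : ℂ) • G y)).re = t * (innA A (G y) (G y)).re := by
        rw [innA_smul_right, Complex.re_ofReal_mul]
      have eb : (innA A ((t : ℂ) • G y) ((t : ℂ) • G y)).re
          = t ^ 2 * (innA A (G y) (G y)).re :=
        innA_real_smul_self hA t (G y)
      rw [ea, eb] at hstep
      have et1 : t * (innA A (G y) (G y)).re = sν * m := by
        rw [ht, ← hmsq]; field_simp
      have et2 : t ^ 2 * (innA A (G y) (G y)).re = (innA A y y).re := by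
        rw [ht, ← hmsq, ← hsνsq]; field_simp
      rw [et1, et2] at hstep
      have hmain : sν * m ≤ w * (innA A y y).re := by linarith
      have hsq : (sν * m) * (sν * m) ≤ (w * (innA A y y).re) * (w * (innA A y y).re) :=
        mul_le_mul hmain hmain (by positivity) (by positivity)
      nlinarith [hsq, hsνsq, hmsq, hy']
end polar

lemma cexp_conj_pos (θ : ℝ) :
    starRingEnd ℂ (Complex.exp ((θ:ℂ) * Complex.I)) = Complex.exp (-((θ:ℂ) * Complex.I)) := by
  rw [← Complex.exp_conj]
  congr 1
  simp [Complex.conj_ofReal]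

lemma cexp_conj_neg (θ : ℝ) :
    starRingEnd ℂ (Complex.exp (-((θ:ℂ) * Complex.I))) = Complex.exp ((θ:ℂ) * Complex.I) := by
  rw [← Complex.exp_conj]
  congr 1
  simp [Complex.conj_ofReal]

lemma cexp_abs_neg (θ : ℝ) : ‖Complex.exp (-((θ:ℂ) * Complex.I))‖ = 1 := by
  rw [show -(((θ:ℝ):ℂ) * Complex.I) = (((-θ : ℝ):ℝ):ℂ) * Complex.I from by push_cast; ring]
  exact Complex.norm_exp_ofReal_mul_I _

set_option maxHeartbeats 1600000 in
theorem stmt17 (A T S : H →L[ℂ] H) (hA : StrictPos A) (hS : IsAAdjoint A T S) :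
    (1/4) * (sInf {v : ℝ | ∃ x : H, ∃ φ : ℝ, vnormA A x = 1 ∧
        v = vnormA A (((2:ℂ)⁻¹ • (Complex.exp ((φ : ℝ) * Complex.I) • (T^2) + Complex.exp (-((φ : ℝ) * Complex.I)) • (S^2))) x)})^2 +
      (1/8) * cA A (T^2 * (S * T + T * S) + (S * T + T * S) * T^2) +
      (1/16) * (opNormA' A (S * T + T * S))^2 ≤ (wA A T)^4 := by
  obtain ⟨hPos, hStrict⟩ := hA
  have hAdj : ContinuousLinearMap.adjoint A = A := hPos.isSelfAdjoint.adjoint_eq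
  have hS' : A.comp S = (ContinuousLinearMap.adjoint T).comp A := hS
  have hν0 : ∀ y : H, 0 ≤ (innA A y y).re := innA_nonneg hPos
  have hunit : ∀ y : H, vnormA A y = 1 → (innA A y y).re = 1 := by
    intro y hy
    exact Real.sqrt_eq_one.mp hy
  have hvnn : ∀ z : H, 0 ≤ vnormA A z := fun z => Real.sqrt_nonneg _
  set Pop : H →L[ℂ] H := S * T + T * S with hPop
  set Qop : H →L[ℂ] H := T^2 * Pop + Pop * T^2 with hQop
  set Cset := {v : ℝ | ∃ x : H, ∃ φ : ℝ, vnormA A x = 1 ∧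
        v = vnormA A (((2:ℂ)⁻¹ • (Complex.exp ((φ : ℝ) * Complex.I) • (T^2) + Complex.exp (-((φ : ℝ) * Complex.I)) • (S^2))) x)} with hCset
  by_cases htriv : ∀ y : H, y = 0
  · have hv1 : ∀ y : H, vnormA A y ≠ 1 := by
      intro y
      rw [htriv y]
      show Real.sqrt (innA A 0 0).re ≠ 1
      rw [show innA A (0:H) (0:H) = 0 from by simp [innA]]
      norm_num
    have e1 : Cset = ∅ := by
      ext r
      simp only [hCset, Set.mem_setOf_eq, Set.mem_empty_iff_false, iff_false, not_exists]
      intro x φ h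
      exact hv1 x h.1
    have e2 : {r : ℝ | ∃ x : H, vnormA A x = 1 ∧ r = ‖innA A (Qop x) x‖} = ∅ := by
      ext r
      simp only [Set.mem_setOf_eq, Set.mem_empty_iff_false, iff_false, not_exists]
      intro x h
      exact hv1 x h.1
    have e3 : {r : ℝ | ∃ x : H, vnormA A x = 1 ∧ r = vnormA A (Pop x)} = ∅ := by
      ext r
      simp only [Set.mem_setOf_eq, Set.mem_empty_iff_false, iff_false, not_exists]
      intro x h
      exact hv1 x h.1
    have e4 : {r : ℝ | ∃ x : H, vnormA A x = 1 ∧ r = ‖innA A (T x) x‖} = ∅ := by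
      ext r
      simp only [Set.mem_setOf_eq, Set.mem_empty_iff_false, iff_false, not_exists]
      intro x h
      exact hv1 x h.1
    show (1/4) * (sInf Cset)^2 + (1/8) * cA A Qop + (1/16) * (opNormA' A Pop)^2 ≤ (wA A T)^4
    rw [show cA A Qop = sInf {r : ℝ | ∃ x : H, vnormA A x = 1 ∧ r = ‖innA A (Qop x) x‖} from rfl]
    rw [show opNormA' A Pop = sSup {r : ℝ | ∃ x : H, vnormA A x = 1 ∧ r = vnormA A (Pop x)} from rfl]
    rw [show wA A T = sSup {r : ℝ | ∃ x : H, vnormA A x = 1 ∧ r = ‖innA A (T x) x‖} from rfl]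
    rw [e1, e2, e3, e4, Real.sInf_empty, Real.sSup_empty]
    norm_num
  · push_neg at htriv
    obtain ⟨x₀, hx₀⟩ := htriv
    have hx₀ν : 0 < (innA A x₀ x₀).re := hStrict x₀ hx₀
    set u₀ : H := (((Real.sqrt (innA A x₀ x₀).re)⁻¹ : ℝ) : ℂ) • x₀ with hu₀
    have hu₀1 : vnormA A u₀ = 1 := by
      show Real.sqrt _ = 1
      rw [hu₀, innA_real_smul_self hAdj]
      rw [show ((Real.sqrt (innA A x₀ x₀).re)⁻¹) ^ 2 * (innA A x₀ x₀).re = 1 from by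
        rw [inv_pow, Real.sq_sqrt (hν0 x₀)]
        exact inv_mul_cancel₀ hx₀ν.ne']
      exact Real.sqrt_one
    -- numerical radius facts
    have hwBdd : BddAbove {r : ℝ | ∃ x : H, vnormA A x = 1 ∧ r = ‖innA A (T x) x‖} := by
      refine ⟨Real.sqrt ‖S * T‖, ?_⟩
      rintro r ⟨x, hx1, rfl⟩
      have hx2 : (innA A x x).re = 1 := hunit x hx1
      have h1 := innA_cs hPos (T x) x
      rw [hx2, mul_one] at h1
      have h2 := innA_abound hPos hS' x
      rw [hx2, mul_one] at h2
      exact (Real.le_sqrt (norm_nonneg _) (norm_nonneg _)).mpr (le_trans h1 h2)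
    have hw0 : 0 ≤ wA A T := by
      apply Real.sSup_nonneg
      rintro r ⟨x, hx1, rfl⟩
      exact norm_nonneg _
    have hwle : ∀ x : H, vnormA A x = 1 → ‖innA A (T x) x‖ ≤ wA A T :=
      fun x hx => le_csSup hwBdd ⟨x, hx, rfl⟩
    have hwall : ∀ y : H, ‖innA A (T y) y‖ ≤ wA A T * (innA A y y).re := by
      intro y
      by_cases hy : (innA A y y).re = 0
      · have h1 := innA_cs hPos (T y) y
        rw [hy, mul_zero] at h1
        have h2 : ‖innA A (T y) y‖ = 0 := by
          nlinarith [norm_nonneg (innA A (T y) y)]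
        rw [h2, hy, mul_zero]
      · have hy' : 0 < (innA A y y).re := lt_of_le_of_ne (hν0 y) (Ne.symm hy)
        have hssq : (Real.sqrt (innA A y y).re) ^ 2 = (innA A y y).re := Real.sq_sqrt (hν0 y)
        have hspos : 0 < Real.sqrt (innA A y y).re := Real.sqrt_pos.2 hy'
        set s := Real.sqrt (innA A y y).re
        set u := ((s⁻¹ : ℝ) : ℂ) • y with hu
        have hu1 : vnormA A u = 1 := by
          show Real.sqrt _ = 1
          rw [hu, innA_real_smul_self hAdj]
          rw [show (s⁻¹) ^ 2 * (innA A y y).re = 1 from by rw [← hssq]; field_simp]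
          exact Real.sqrt_one
        have hTu : innA A (T u) u = (((s⁻¹) ^ 2 : ℝ) : ℂ) * innA A (T y) y := by
          rw [hu, map_smul, innA_smul_right, innA_smul_left, Complex.conj_ofReal]
          push_cast
          ring
        have h3 := hwle u hu1
        rw [hTu, norm_mul, Complex.norm_real, Real.norm_eq_abs,
          _root_.abs_of_nonneg (by positivity : (0:ℝ) ≤ (s⁻¹)^2)] at h3
        have h4 : ‖innA A (T y) y‖
            = s^2 * ((s⁻¹)^2 * ‖innA A (T y) y‖) := by
          field_simp
        rw [h4, ← hssq]
        nlinarith [h3, hspos]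
    -- lower bounds on infima
    have hCBdd : BddBelow Cset := by
      refine ⟨0, ?_⟩
      rintro r ⟨x, φ, hx1, rfl⟩
      exact hvnn _
    have hCC0 : 0 ≤ sInf Cset := by
      apply Real.sInf_nonneg
      rintro r ⟨x, φ, hx1, rfl⟩
      exact hvnn _
    have hcBdd : BddBelow {r : ℝ | ∃ x : H, vnormA A x = 1 ∧ r = ‖innA A (Qop x) x‖} := by
      refine ⟨0, ?_⟩
      rintro r ⟨x, hx1, rfl⟩
      exact norm_nonneg _
    -- the key per-unit-vector inequality
    have key : ∀ x : H, vnormA A x = 1 →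
        (1/4) * (sInf Cset)^2 + (1/8) * cA A Qop + (1/16) * (vnormA A (Pop x))^2
          ≤ (wA A T)^4 := by
      intro x hx1
      have hx2 : (innA A x x).re = 1 := hunit x hx1
      set z := innA A (Qop x) x with hz
      set φ := Complex.arg z with hφ
      set θ : ℝ := φ / 2 with hθ
      set e := Complex.exp ((θ:ℂ) * Complex.I) with he
      set e' := Complex.exp (-((θ:ℂ) * Complex.I)) with he'
      set E := Complex.exp ((φ:ℂ) * Complex.I) with hE
      set E' := Complex.exp (-((φ:ℂ) * Complex.I)) with hE'
      set G : H →L[ℂ] H := (2:ℂ)⁻¹ • (e • T + e' • S) with hG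
      set Rop : H →L[ℂ] H := (2:ℂ)⁻¹ • (E • (T^2) + E' • (S^2)) with hRop
      have hconj_e : starRingEnd ℂ e = e' := cexp_conj_pos θ
      have hconj_e' : starRingEnd ℂ e' = e := cexp_conj_neg θ
      have hconj_E : starRingEnd ℂ E = E' := cexp_conj_pos φ
      have hconj_E' : starRingEnd ℂ E' = E := cexp_conj_neg φ
      have hconj_half : starRingEnd ℂ ((2:ℂ)⁻¹) = (2:ℂ)⁻¹ := by
        rw [show ((2:ℂ))⁻¹ = (((2⁻¹:ℝ)):ℂ) from by norm_num, Complex.conj_ofReal]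
      have hGap : ∀ y, G y = (2:ℂ)⁻¹ • (e • T y + e' • S y) := by
        intro y
        rw [hG]
        simp
      have hGsa : ∀ u v, innA A (G u) v = innA A u (G v) := by
        intro u v
        rw [hGap, hGap]
        rw [innA_smul_left, innA_add_left, innA_smul_left, innA_smul_left,
          innA_smul_right, innA_add_right, innA_smul_right, innA_smul_right,
          innA_move_T hAdj hS', innA_move_S hAdj hS',
          hconj_e, hconj_e', hconj_half]
        ring
      have hGnum : ∀ y, ‖innA A (G y) y‖ ≤ wA A T * (innA A y y).re := by
        intro y
        have hζ : innA A (G y) y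
            = (2:ℂ)⁻¹ * (e' * innA A (T y) y + e * starRingEnd ℂ (innA A (T y) y)) := by
          rw [hGap, innA_smul_left, innA_add_left, innA_smul_left, innA_smul_left,
            hconj_e, hconj_e', hconj_half]
          rw [innA_move_S hAdj hS', innA_conj hAdj y (T y), Complex.conj_conj]
        rw [hζ]
        rw [show e * starRingEnd ℂ (innA A (T y) y) = starRingEnd ℂ (e' * innA A (T y) y) from by
          rw [map_mul, hconj_e']]
        rw [Complex.add_conj]
        have h5 : ‖(2:ℂ)⁻¹‖ = 2⁻¹ := by norm_num
        rw [norm_mul, h5]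
        have h6 : ‖((2 * (e' * innA A (T y) y).re : ℝ) : ℂ)‖
            ≤ 2 * ‖innA A (T y) y‖ := by
          rw [Complex.norm_real, Real.norm_eq_abs, abs_mul]
          have h7 : |(e' * innA A (T y) y).re| ≤ ‖e' * innA A (T y) y‖ :=
            Complex.abs_re_le_norm _
          rw [norm_mul, he', cexp_abs_neg θ, one_mul] at h7
          have : |(2:ℝ)| = 2 := by norm_num
          rw [this]
          nlinarith [h7]
        calc (2⁻¹ : ℝ) * ‖((2 * (e' * innA A (T y) y).re : ℝ) : ℂ)‖
            ≤ 2⁻¹ * (2 * ‖innA A (T y) y‖) :=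
              mul_le_mul_of_nonneg_left h6 (by positivity)
        _ = ‖innA A (T y) y‖ := by ring
        _ ≤ wA A T * (innA A y y).re := hwall y
      have hGbound := fun y => innA_selfadj_bound hPos hGsa hw0 hGnum y
      have h4 : (innA A (G (G x)) (G (G x))).re ≤ (wA A T)^4 := by
        have h5 := hGbound (G x)
        have h6 := hGbound x
        rw [hx2, mul_one] at h6
        calc (innA A (G (G x)) (G (G x))).re ≤ (wA A T)^2 * (innA A (G x) (G x)).re := h5
        _ ≤ (wA A T)^2 * (wA A T)^2 := mul_le_mul_of_nonneg_left h6 (by positivity)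
        _ = (wA A T)^4 := by ring
      -- algebraic expansion of G (G x)
      have hEe : E = e * e := by
        rw [hE, he, ← Complex.exp_add]
        congr 1
        rw [hθ]
        push_cast
        ring
      have hE'e : E' = e' * e' := by
        rw [hE', he', ← Complex.exp_add]
        congr 1
        rw [hθ]
        push_cast
        ring
      have hGG : G (G x) = (4:ℂ)⁻¹ • Pop x + (2:ℂ)⁻¹ • Rop x := by
        have hee' : e * e' = 1 := by
          rw [he, he', ← Complex.exp_add]
          simp
        rw [show (4:ℂ)⁻¹ • Pop x = (4:ℂ)⁻¹ • ((e * e') • Pop x) from by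
          rw [hee', one_smul]]
        rw [hGap, hGap]
        simp only [map_add, map_smul, smul_smul, hPop, hRop,
          ContinuousLinearMap.add_apply, ContinuousLinearMap.smul_apply,
          ContinuousLinearMap.mul_apply, pow_two]
        rw [hEe, hE'e]
        module
      have hPsa : ∀ u v, innA A (Pop u) v = innA A u (Pop v) := by
        intro u v
        simp only [hPop, ContinuousLinearMap.add_apply, ContinuousLinearMap.mul_apply]
        rw [innA_add_left, innA_move_S hAdj hS' (T u) v, innA_move_T hAdj hS' u (T v),
          innA_move_T hAdj hS' (S u) v, innA_move_S hAdj hS' u (S v), ← innA_add_right]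
      have hT2 : ∀ u v, innA A ((T^2) u) v = innA A u ((S^2) v) := by
        intro u v
        rw [show (T^2) u = T (T u) from by rw [pow_two, ContinuousLinearMap.mul_apply],
          show (S^2) v = S (S v) from by rw [pow_two, ContinuousLinearMap.mul_apply],
          innA_move_T hAdj hS' (T u) v, innA_move_T hAdj hS' u (S v)]
      set a2 := innA A (Pop x) ((T^2) x) with ha2
      set b2 := innA A (Pop x) ((S^2) x) with hb2
      have hzz : z = b2 + starRingEnd ℂ a2 := by
        rw [hz, hQop]
        simp only [ContinuousLinearMap.add_apply, ContinuousLinearMap.mul_apply]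
        rw [innA_add_left]
        congr 1
        · exact hT2 (Pop x) x
        · rw [hPsa ((T^2) x) x, innA_conj hAdj (Pop x) ((T^2) x)]
      have hRx : innA A (Pop x) (Rop x) = (2:ℂ)⁻¹ * (E * a2 + E' * b2) := by
        rw [hRop]
        simp only [ContinuousLinearMap.smul_apply, ContinuousLinearMap.add_apply]
        rw [innA_smul_right, innA_add_right, innA_smul_right, innA_smul_right]
      have hEz : E' * z = ((‖z‖ : ℝ) : ℂ) := by
        have h0 := Complex.norm_mul_exp_arg_mul_I z
        rw [← hφ] at h0
        calc E' * z = E' * (((‖z‖ : ℝ):ℂ) * Complex.exp ((φ:ℂ) * Complex.I)) := by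
              rw [h0]
        _ = ((‖z‖ : ℝ):ℂ)
              * (Complex.exp (-((φ:ℂ) * Complex.I)) * Complex.exp ((φ:ℂ) * Complex.I)) := by
              rw [hE']; ring
        _ = ((‖z‖ : ℝ):ℂ) := by rw [← Complex.exp_add]; simp
      have hreEz : (E' * z).re = ‖z‖ := by rw [hEz]; exact Complex.ofReal_re _
      have hcross : (innA A (Pop x) (Rop x)).re = (1/2) * ‖z‖ := by
        rw [hRx]
        have h7 : E' * z = E' * b2 + starRingEnd ℂ (E * a2) := by
          rw [hzz, map_mul, hconj_E]
          ring
        rw [show (2:ℂ)⁻¹ * (E * a2 + E' * b2) = (((2⁻¹:ℝ)):ℂ) * (E * a2 + E' * b2) from by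
          norm_num]
        rw [Complex.re_ofReal_mul, Complex.add_re]
        have h8 : (E * a2).re + (E' * b2).re = ‖z‖ := by
          have h9 := hreEz
          rw [h7, Complex.add_re, Complex.conj_re] at h9
          linarith
        rw [h8]
        norm_num
      have hval : (innA A (G (G x)) (G (G x))).re
          = (1/16) * (innA A (Pop x) (Pop x)).re + (1/4) * (innA A (Rop x) (Rop x)).re
            + (1/8) * ‖z‖ := by
        rw [hGG, innA_expand hAdj]
        have ha : (innA A ((4:ℂ)⁻¹ • Pop x) ((4:ℂ)⁻¹ • Pop x)).re
            = (1/16) * (innA A (Pop x) (Pop x)).re := by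
          rw [show ((4:ℂ)⁻¹) = (((4⁻¹ : ℝ)) : ℂ) from by push_cast; norm_num]
          rw [innA_real_smul_self hAdj]
          norm_num
        have hb : (innA A ((2:ℂ)⁻¹ • Rop x) ((2:ℂ)⁻¹ • Rop x)).re
            = (1/4) * (innA A (Rop x) (Rop x)).re := by
          rw [show ((2:ℂ)⁻¹) = (((2⁻¹ : ℝ)) : ℂ) from by push_cast; norm_num]
          rw [innA_real_smul_self hAdj]
          norm_num
        have hab : (innA A ((4:ℂ)⁻¹ • Pop x) ((2:ℂ)⁻¹ • Rop x)).re
            = (1/8) * (innA A (Pop x) (Rop x)).re := by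
          rw [innA_smul_left, innA_smul_right]
          rw [show starRingEnd ℂ ((4:ℂ)⁻¹) = (4:ℂ)⁻¹ from by
            rw [show ((4:ℂ))⁻¹ = (((4⁻¹:ℝ)):ℂ) from by push_cast; norm_num,
              Complex.conj_ofReal]]
          rw [show (4:ℂ)⁻¹ * ((2:ℂ)⁻¹ * innA A (Pop x) (Rop x))
              = (((8⁻¹:ℝ)):ℂ) * innA A (Pop x) (Rop x) from by push_cast; ring]
          rw [Complex.re_ofReal_mul]
          norm_num
        rw [ha, hb, hab, hcross]
        ring
      -- bounds via infima
      have hCle : sInf Cset ≤ vnormA A (Rop x) := by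
        apply csInf_le hCBdd
        exact ⟨x, φ, hx1, rfl⟩
      have hC2 : (sInf Cset)^2 ≤ (innA A (Rop x) (Rop x)).re := by
        have hrs : (vnormA A (Rop x))^2 = (innA A (Rop x) (Rop x)).re := Real.sq_sqrt (hν0 _)
        calc (sInf Cset)^2 ≤ (vnormA A (Rop x))^2 := pow_le_pow_left₀ hCC0 hCle 2
        _ = (innA A (Rop x) (Rop x)).re := hrs
      have hcle : cA A Qop ≤ ‖z‖ := by
        show sInf _ ≤ _
        apply csInf_le hcBdd
        exact ⟨x, hx1, rfl⟩
      have hPx2 : (vnormA A (Pop x))^2 = (innA A (Pop x) (Pop x)).re := Real.sq_sqrt (hν0 _)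
      rw [hval] at h4
      rw [hPx2]
      linarith [hC2, hcle, h4]
    -- final assembly
    set D := (wA A T)^4 - (1/4)*(sInf Cset)^2 - (1/8)*cA A Qop with hD
    have hD16 : ∀ x : H, vnormA A x = 1 → (vnormA A (Pop x))^2 ≤ 16 * D := by
      intro x hx1
      have hk := key x hx1
      rw [hD]
      linarith
    have hD0 : 0 ≤ D := by
      have h := hD16 u₀ hu₀1
      nlinarith [sq_nonneg (vnormA A (Pop u₀))]
    have hple : opNormA' A Pop ≤ Real.sqrt (16*D) := by
      show sSup _ ≤ _
      refine csSup_le ⟨vnormA A (Pop u₀), ⟨u₀, hu₀1, rfl⟩⟩ ?_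
      rintro r ⟨x, hx1, rfl⟩
      exact (Real.le_sqrt (hvnn _) (by positivity)).mpr (hD16 x hx1)
    have hpnn : 0 ≤ opNormA' A Pop := by
      apply Real.sSup_nonneg
      rintro r ⟨x, hx1, rfl⟩
      exact hvnn _
    have hsq16 : (Real.sqrt (16*D))^2 = 16*D := Real.sq_sqrt (by positivity)
    have hp2 : (opNormA' A Pop)^2 ≤ 16*D := by
      calc (opNormA' A Pop)^2 ≤ (Real.sqrt (16*D))^2 := pow_le_pow_left₀ hpnn hple 2
      _ = 16*D := hsq16
    have hp2' : (opNormA' A Pop)^2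
        ≤ 16 * ((wA A T)^4 - (1/4)*(sInf Cset)^2 - (1/8)*cA A Qop) := by
      rw [← hD]
      exact hp2
    show (1/4) * (sInf Cset)^2 + (1/8) * cA A Qop + (1/16) * (opNormA' A Pop)^2 ≤ (wA A T)^4
    linarith [hp2']
end
end

section
/- Let A be a strictly positive operator on H and X, T, Y ∈ B_A(H). Then for all x ∈ H: |⟨X^{♯A}TYx, x⟩_A| + |⟨Y^{♯A}TXx, x⟩_A| ≤ 2·w_A(T)·‖Xx‖_A·‖Yx‖_A. -/
noncomputable section
open Complex ContinuousLinearMap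

variable {H : Type*} [NormedAddCommGroup H] [InnerProductSpace ℂ H] [CompleteSpace H]

set_option maxHeartbeats 1000000
set_option synthInstance.maxHeartbeats 400000

/-- arithmetic: if `a^(2^n) ≤ b^(2^n) * C` for all n then `a ≤ b`. -/
lemma pow_limit {a b C : ℝ} (ha : 0 ≤ a) (hb : 0 ≤ b)
    (h : ∀ n : ℕ, a ^ (2 ^ n) ≤ b ^ (2 ^ n) * C) : a ≤ b := by
  by_contra hab
  push_neg at hab
  rcases eq_or_lt_of_le hb with hb0 | hb0
  · subst hb0
    have h0 := h 0
    simp at h0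
    linarith
  · have hr : 1 < a / b := (one_lt_div hb0).2 hab
    have h2 : ∀ n : ℕ, (a / b) ^ (2 ^ n) ≤ C := by
      intro n
      rw [div_pow, div_le_iff₀ (by positivity)]
      linarith [h n]
    have h3 : ∀ n : ℕ, (a / b) ^ n ≤ C := fun n =>
      le_trans (pow_le_pow_right₀ hr.le (Nat.lt_two_pow_self (n := n)).le) (h2 n)
    obtain ⟨n, hn⟩ := ((tendsto_pow_atTop_atTop_of_one_lt hr).eventually_gt_atTop C).exists
    linarith [h3 n]

/-- phase alignment -/
lemma align (a b : ℂ) : ∃ lam : ℂ, ‖lam‖ = 1 ∧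
    ‖a‖ + ‖b‖ = ‖(starRingEnd ℂ) lam * a + lam * b‖ := by
  by_cases ha : a = 0
  · exact ⟨1, by simp, by simp [ha]⟩
  by_cases hb : b = 0
  · exact ⟨1, by simp, by simp [hb]⟩
  set w : ℂ := (a * (starRingEnd ℂ) b) / ((‖a‖ * ‖b‖ : ℝ) : ℂ) with hw
  obtain ⟨lam, hlam⟩ := IsAlgClosed.exists_pow_nat_eq w zero_lt_two
  have h1a : ‖a‖ ≠ 0 := by simpa using ha
  have h1b : ‖b‖ ≠ 0 := by simpa using hb
  have habs : ‖w‖ = 1 := by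
    rw [hw, norm_div, norm_mul, Complex.norm_conj, Complex.norm_real, Real.norm_eq_abs,
      _root_.abs_of_nonneg (by positivity : (0:ℝ) ≤ ‖a‖ * ‖b‖)]
    field_simp
  have hlabs : ‖lam‖ = 1 := by
    have : ‖lam‖ ^ 2 = 1 := by rw [← norm_pow, hlam, habs]
    nlinarith [norm_nonneg lam]
  refine ⟨lam, hlabs, ?_⟩
  have key : ((starRingEnd ℂ) lam * a) * (starRingEnd ℂ) (lam * b) =
      ((‖a‖ * ‖b‖ : ℝ) : ℂ) := by
    have hl2 : (starRingEnd ℂ) lam * (starRingEnd ℂ) lam = (starRingEnd ℂ) w := by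
      rw [← map_mul, ← sq, hlam]
    have hcw : (starRingEnd ℂ) w =
        ((starRingEnd ℂ) a * b) / ((‖a‖ * ‖b‖ : ℝ) : ℂ) := by
      rw [hw, map_div₀, map_mul, Complex.conj_conj, Complex.conj_ofReal]
    have hab0 : ((‖a‖ * ‖b‖ : ℝ) : ℂ) ≠ 0 := by
      simp only [ne_eq, Complex.ofReal_eq_zero]
      exact mul_ne_zero h1a h1b
    have hmuls : a * (starRingEnd ℂ) a = ((‖a‖ ^ 2 : ℝ) : ℂ) := by
      rw [Complex.mul_conj, ← Complex.sq_norm]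
    have hmulb : b * (starRingEnd ℂ) b = ((‖b‖ ^ 2 : ℝ) : ℂ) := by
      rw [Complex.mul_conj, ← Complex.sq_norm]
    calc ((starRingEnd ℂ) lam * a) * (starRingEnd ℂ) (lam * b)
        = ((starRingEnd ℂ) lam * (starRingEnd ℂ) lam) * (a * (starRingEnd ℂ) b) := by
          rw [map_mul]; ring
      _ = ((starRingEnd ℂ) a * b) / ((‖a‖ * ‖b‖ : ℝ) : ℂ) *
            (a * (starRingEnd ℂ) b) := by rw [hl2, hcw]
      _ = (a * (starRingEnd ℂ) a) * (b * (starRingEnd ℂ) b) /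
            ((‖a‖ * ‖b‖ : ℝ) : ℂ) := by ring
      _ = ((‖a‖ * ‖b‖ : ℝ) : ℂ) := by
          rw [hmuls, hmulb]
          push_cast
          rw [div_eq_iff (by push_cast at hab0 ⊢; exact hab0)]
          ring
  have hsq : Complex.normSq ((starRingEnd ℂ) lam * a + lam * b) =
      (‖a‖ + ‖b‖) ^ 2 := by
    rw [Complex.normSq_add, key]
    have h1 : Complex.normSq ((starRingEnd ℂ) lam * a) = Complex.normSq a := by
      rw [Complex.normSq_mul, Complex.normSq_conj, ← Complex.sq_norm lam, hlabs]
      ring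
    have h2 : Complex.normSq (lam * b) = Complex.normSq b := by
      rw [Complex.normSq_mul, ← Complex.sq_norm lam, hlabs]
      ring
    rw [h1, h2, ← Complex.sq_norm a, ← Complex.sq_norm b]
    simp only [Complex.ofReal_re]
    ring
  have hfin : ‖(starRingEnd ℂ) lam * a + lam * b‖
      = Real.sqrt ((‖a‖ + ‖b‖) ^ 2) := by
    rw [Complex.norm_def, hsq]
  rw [hfin, Real.sqrt_sq (by positivity)]

/-- existence of a square-root factorization of the A-inner ℂ product -/
lemma exists_Q (A : H →L[ℂ] H) (hA : A.IsPositive) :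
    ∃ Q : H →L[ℂ] H, ∀ x y : H, innA A x y = inner ℂ (Q x) (Q y) := by
  have h0 : (0 : H →L[ℂ] H) ≤ A := (A.nonneg_iff_isPositive).2 hA
  refine ⟨CFC.sqrt A, fun x y => ?_⟩
  set Q := CFC.sqrt A with hQdef
  have hqn : (0 : H →L[ℂ] H) ≤ Q := CFC.sqrt_nonneg (a := A)
  have hs : ContinuousLinearMap.adjoint Q = Q :=
    isSelfAdjoint_iff'.mp hqn.isSelfAdjoint
  have h2 : Q * Q = A := by rw [← sq]; exact CFC.sq_sqrt A h0
  have h3 : A x = Q (Q x) := by rw [← h2]; rfl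
  calc innA A x y = inner ℂ (Q (Q x)) y := by rw [innA, h3]
    _ = inner ℂ ((ContinuousLinearMap.adjoint Q) (Q x)) y := by rw [hs]
    _ = inner ℂ (Q x) (Q y) := ContinuousLinearMap.adjoint_inner_left _ _ _

section core
variable (A T Q : H →L[ℂ] H)

lemma vnorm_nonneg (A : H →L[ℂ] H) (z : H) : 0 ≤ vnormA A z := Real.sqrt_nonneg _

lemma inner_self_re (z : H) : ((inner ℂ z z : ℂ)).re = ‖z‖ ^ 2 := by
  rw [inner_self_eq_norm_sq_to_K (𝕜 := ℂ)]
  norm_cast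

lemma vnorm_eq (hQ : ∀ x y : H, innA A x y = inner ℂ (Q x) (Q y)) (z : H) :
    vnormA A z = ‖Q z‖ := by
  rw [vnormA, hQ z z, inner_self_re, Real.sqrt_sq (norm_nonneg _)]

lemma csA (hQ : ∀ x y : H, innA A x y = inner ℂ (Q x) (Q y)) (z w : H) :
    ‖innA A z w‖ ≤ vnormA A z * vnormA A w := by
  rw [hQ, vnorm_eq A Q hQ, vnorm_eq A Q hQ]
  exact norm_inner_le_norm _ _

lemma vnorm_smul (hQ : ∀ x y : H, innA A x y = inner ℂ (Q x) (Q y)) (c : ℂ) (z : H) :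
    vnormA A (c • z) = ‖c‖ * vnormA A z := by
  rw [vnorm_eq A Q hQ, vnorm_eq A Q hQ, map_smul, norm_smul]

lemma vnorm_sq (hQ : ∀ x y : H, innA A x y = inner ℂ (Q x) (Q y)) (z : H) :
    vnormA A z ^ 2 = (innA A z z).re := by
  rw [vnorm_eq A Q hQ, hQ z z, inner_self_re]

/-- main operator bound: if T has an A-adjoint S then ‖Tx‖_A ≤ √‖ST‖ ‖x‖_A -/
lemma Tbound (S : H →L[ℂ] H) (hA : StrictPos A)
    (hQ : ∀ x y : H, innA A x y = inner ℂ (Q x) (Q y)) (hT : IsAAdjoint A T S) :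
    ∀ x : H, vnormA A (T x) ≤ Real.sqrt ‖S * T‖ * vnormA A x := by
  have hAsa : ContinuousLinearMap.adjoint A = A := isSelfAdjoint_iff'.mp hA.1.isSelfAdjoint
  set R := S * T with hR
  have hTS : ∀ z, A (S z) = (ContinuousLinearMap.adjoint T) (A z) := fun z =>
    DFunLike.congr_fun hT z
  have hST : ∀ z, (ContinuousLinearMap.adjoint S) (A z) = A (T z) := by
    intro z
    have h := congrArg ContinuousLinearMap.adjoint hT
    rw [ContinuousLinearMap.adjoint_comp, ContinuousLinearMap.adjoint_comp,
      ContinuousLinearMap.adjoint_adjoint, hAsa] at h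
    exact DFunLike.congr_fun h z
  have innR : ∀ u v : H, (inner ℂ (A (R u)) v : ℂ) = inner ℂ (A u) (R v) := by
    intro u v
    calc (inner ℂ (A (R u)) v : ℂ)
        = inner ℂ ((ContinuousLinearMap.adjoint T) (A (T u))) v := by
          rw [show A (R u) = (ContinuousLinearMap.adjoint T) (A (T u)) from hTS (T u)]
      _ = inner ℂ (A (T u)) (T v) := ContinuousLinearMap.adjoint_inner_left _ _ _
      _ = inner ℂ ((ContinuousLinearMap.adjoint S) (A u)) (T v) := by rw [hST u]
      _ = inner ℂ (A u) (S (T v)) := ContinuousLinearMap.adjoint_inner_left _ _ _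
      _ = inner ℂ (A u) (R v) := rfl
  have innRk : ∀ (k : ℕ) (u v : H), (inner ℂ (A ((R ^ k) u)) v : ℂ) = inner ℂ (A u) ((R ^ k) v) := by
    intro k
    induction k with
    | zero => intro u v; simp
    | succ k ih =>
      intro u v
      have h1 : (R ^ (k + 1)) u = R ((R ^ k) u) := by rw [pow_succ']; rfl
      have h2 : (R ^ (k + 1)) v = (R ^ k) (R v) := by rw [pow_succ]; rfl
      calc (inner ℂ (A ((R ^ (k + 1)) u)) v : ℂ)
          = inner ℂ (A (R ((R ^ k) u))) v := by rw [h1]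
        _ = inner ℂ (A ((R ^ k) u)) (R v) := innR _ _
        _ = inner ℂ (A u) ((R ^ k) (R v)) := ih _ _
        _ = inner ℂ (A u) ((R ^ (k + 1)) v) := by rw [h2]
  -- step for T
  have step0 : ∀ x : H, vnormA A (T x) ^ 2 ≤ vnormA A (R x) * vnormA A x := by
    intro x
    have h1 : (innA A (T x) (T x)) = innA A x (R x) := by
      rw [innA, innA, show A (T x) = (ContinuousLinearMap.adjoint S) (A x) from (hST x).symm,
        ContinuousLinearMap.adjoint_inner_left]
      rfl
    calc vnormA A (T x) ^ 2 = (innA A (T x) (T x)).re := vnorm_sq A Q hQ _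
      _ = (innA A x (R x)).re := by rw [h1]
      _ ≤ ‖innA A x (R x)‖ := Complex.re_le_norm _
      _ ≤ vnormA A x * vnormA A (R x) := csA A Q hQ _ _
      _ = vnormA A (R x) * vnormA A x := mul_comm _ _
  have stepk : ∀ (k : ℕ) (x : H),
      vnormA A ((R ^ k) x) ^ 2 ≤ vnormA A ((R ^ (2 * k)) x) * vnormA A x := by
    intro k x
    have h1 : innA A ((R ^ k) x) ((R ^ k) x) = innA A x ((R ^ (2 * k)) x) := by
      rw [innA, innA, innRk k]
      congr 1
      rw [two_mul, pow_add]
      rfl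
    calc vnormA A ((R ^ k) x) ^ 2 = (innA A ((R ^ k) x) ((R ^ k) x)).re := vnorm_sq A Q hQ _
      _ = (innA A x ((R ^ (2 * k)) x)).re := by rw [h1]
      _ ≤ ‖innA A x ((R ^ (2 * k)) x)‖ := Complex.re_le_norm _
      _ ≤ vnormA A x * vnormA A ((R ^ (2 * k)) x) := csA A Q hQ _ _
      _ = vnormA A ((R ^ (2 * k)) x) * vnormA A x := mul_comm _ _
  -- unit vector bound
  have unit : ∀ x : H, vnormA A x = 1 → vnormA A (T x) ^ 2 ≤ ‖R‖ := by
    intro x hx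
    have ind : ∀ n : ℕ, vnormA A (T x) ^ (2 ^ (n + 1)) ≤ vnormA A ((R ^ (2 ^ n)) x) := by
      intro n
      induction n with
      | zero => simpa [hx] using step0 x
      | succ n ih =>
        have hnn : (0:ℝ) ≤ vnormA A (T x) ^ (2 ^ (n + 1)) := pow_nonneg (vnorm_nonneg A _) _
        calc vnormA A (T x) ^ (2 ^ (n + 2))
            = (vnormA A (T x) ^ (2 ^ (n + 1))) ^ 2 := by
              rw [← pow_mul]; ring_nf
          _ ≤ (vnormA A ((R ^ (2 ^ n)) x)) ^ 2 := by
              apply pow_le_pow_left₀ hnn ih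
          _ ≤ vnormA A ((R ^ (2 * 2 ^ n)) x) * vnormA A x := stepk (2 ^ n) x
          _ = vnormA A ((R ^ (2 ^ (n + 1))) x) := by rw [hx, mul_one, ← pow_succ']
    have bnd : ∀ n : ℕ, (vnormA A (T x) ^ 2) ^ (2 ^ n) ≤ ‖R‖ ^ (2 ^ n) * (‖Q‖ * ‖x‖) := by
      intro n
      have h1 : (vnormA A (T x) ^ 2) ^ (2 ^ n) = vnormA A (T x) ^ (2 ^ (n + 1)) := by
        rw [← pow_mul]; ring_nf
      rw [h1]
      calc vnormA A (T x) ^ (2 ^ (n + 1)) ≤ vnormA A ((R ^ (2 ^ n)) x) := ind n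
        _ = ‖Q ((R ^ (2 ^ n)) x)‖ := vnorm_eq A Q hQ _
        _ ≤ ‖Q‖ * ‖(R ^ (2 ^ n)) x‖ := Q.le_opNorm _
        _ ≤ ‖Q‖ * (‖R ^ (2 ^ n)‖ * ‖x‖) := by
            exact mul_le_mul_of_nonneg_left ((R ^ (2 ^ n)).le_opNorm x) (norm_nonneg Q)
        _ ≤ ‖Q‖ * (‖R‖ ^ (2 ^ n) * ‖x‖) := by
            apply mul_le_mul_of_nonneg_left _ (norm_nonneg Q)
            exact mul_le_mul_of_nonneg_right (norm_pow_le' R (by positivity)) (norm_nonneg x)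
        _ = ‖R‖ ^ (2 ^ n) * (‖Q‖ * ‖x‖) := by ring
    exact pow_limit (by positivity) (norm_nonneg R) bnd
  -- general bound
  intro z
  by_cases hz : z = 0
  · have e1 : vnormA A (T z) = 0 := by simp [hz, vnormA, innA]
    have e2 : vnormA A z = 0 := by simp [hz, vnormA, innA]
    rw [e1, e2, mul_zero]
  · have hzpos : 0 < vnormA A z := Real.sqrt_pos.2 (hA.2 z hz)
    set c : ℝ := (vnormA A z)⁻¹ with hc
    have hcpos : 0 < c := inv_pos.2 hzpos
    have hcz : vnormA A ((c : ℂ) • z) = 1 := by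
      rw [vnorm_smul A Q hQ, Complex.norm_real, Real.norm_eq_abs, _root_.abs_of_pos hcpos, hc]
      field_simp
    have h1 := unit ((c : ℂ) • z) hcz
    have h2 : vnormA A (T ((c : ℂ) • z)) = c * vnormA A (T z) := by
      rw [map_smul, vnorm_smul A Q hQ, Complex.norm_real, Real.norm_eq_abs, _root_.abs_of_pos hcpos]
    rw [h2] at h1
    have h3 : (c * vnormA A (T z)) ^ 2 ≤ Real.sqrt ‖R‖ ^ 2 := by
      rw [Real.sq_sqrt (norm_nonneg R)]; exact h1
    have h4 : c * vnormA A (T z) ≤ Real.sqrt ‖R‖ := by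
      have h5 := Real.sqrt_le_sqrt h3
      rwa [Real.sqrt_sq (mul_nonneg hcpos.le (vnorm_nonneg A _)), Real.sqrt_sq (Real.sqrt_nonneg _)] at h5
    calc vnormA A (T z) = (c * vnormA A (T z)) * vnormA A z := by
          rw [hc]; field_simp
      _ ≤ Real.sqrt ‖R‖ * vnormA A z := mul_le_mul_of_nonneg_right h4 hzpos.le

lemma wA_nonneg : 0 ≤ wA A T :=
  Real.sSup_nonneg (by rintro r ⟨x, hx, rfl⟩; exact norm_nonneg _)

lemma wA_bdd (S : H →L[ℂ] H) (hA : StrictPos A)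
    (hQ : ∀ x y : H, innA A x y = inner ℂ (Q x) (Q y)) (hT : IsAAdjoint A T S) :
    BddAbove {r : ℝ | ∃ x : H, vnormA A x = 1 ∧ r = ‖innA A (T x) x‖} := by
  refine ⟨Real.sqrt ‖S * T‖, ?_⟩
  rintro r ⟨x, hx, rfl⟩
  calc ‖innA A (T x) x‖ ≤ vnormA A (T x) * vnormA A x := csA A Q hQ _ _
    _ = vnormA A (T x) := by rw [hx, mul_one]
    _ ≤ Real.sqrt ‖S * T‖ * vnormA A x := Tbound A T Q S hA hQ hT x
    _ = Real.sqrt ‖S * T‖ := by rw [hx, mul_one]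

lemma wA_bound (hA : StrictPos A)
    (hQ : ∀ x y : H, innA A x y = inner ℂ (Q x) (Q y))
    (hbdd : BddAbove {r : ℝ | ∃ x : H, vnormA A x = 1 ∧ r = ‖innA A (T x) x‖}) :
    ∀ z : H, ‖innA A (T z) z‖ ≤ wA A T * vnormA A z ^ 2 := by
  intro z
  by_cases hz : z = 0
  · have e1 : innA A (T z) z = 0 := by simp [hz, innA]
    have e2 : vnormA A z = 0 := by simp [hz, vnormA, innA]
    rw [e1, e2, norm_zero]
    simp
  · have hzpos : 0 < vnormA A z := Real.sqrt_pos.2 (hA.2 z hz)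
    set c : ℝ := (vnormA A z)⁻¹ with hc
    have hcpos : 0 < c := inv_pos.2 hzpos
    have hcz : vnormA A ((c : ℂ) • z) = 1 := by
      rw [vnorm_smul A Q hQ, Complex.norm_real, Real.norm_eq_abs, _root_.abs_of_pos hcpos, hc]
      field_simp
    have hmem : ‖innA A (T ((c : ℂ) • z)) ((c : ℂ) • z)‖ ∈
        {r : ℝ | ∃ x : H, vnormA A x = 1 ∧ r = ‖innA A (T x) x‖} :=
      ⟨(c : ℂ) • z, hcz, rfl⟩
    have hle := le_csSup hbdd hmem
    have he : innA A (T ((c : ℂ) • z)) ((c : ℂ) • z) = ((c ^ 2 : ℝ) : ℂ) * innA A (T z) z := by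
      simp only [innA, map_smul, inner_smul_left, inner_smul_right, Complex.conj_ofReal]
      push_cast
      ring
    have habs : ‖innA A (T ((c : ℂ) • z)) ((c : ℂ) • z)‖
        = c ^ 2 * ‖innA A (T z) z‖ := by
      rw [he, norm_mul, Complex.norm_real, Real.norm_eq_abs, _root_.abs_of_pos (by positivity)]
    rw [habs] at hle
    have h3 : (c ^ 2 * ‖innA A (T z) z‖) * vnormA A z ^ 2
        = ‖innA A (T z) z‖ := by
      rw [hc]
      field_simp
    have h4 := mul_le_mul_of_nonneg_right hle (sq_nonneg (vnormA A z))
    rw [h3] at h4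
    exact h4

lemma polar (p q : H) :
    innA A (T (p + q)) (p + q) - innA A (T (p - q)) (p - q)
      = 2 * (innA A (T p) q + innA A (T q) p) := by
  simp only [innA, map_add, map_sub, inner_add_left, inner_add_right, inner_sub_left,
    inner_sub_right]
  ring

lemma unit_ineq (hA : StrictPos A)
    (hQ : ∀ x y : H, innA A x y = inner ℂ (Q x) (Q y))
    (hbdd : BddAbove {r : ℝ | ∃ x : H, vnormA A x = 1 ∧ r = ‖innA A (T x) x‖})
    (u v : H) (hu : vnormA A u = 1) (hv : vnormA A v = 1) :
    ‖innA A (T u) v‖ + ‖innA A (T v) u‖ ≤ 2 * wA A T := by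
  obtain ⟨lam, hl1, hl2⟩ := align (innA A (T u) v) (innA A (T v) u)
  set p : H := lam • u with hp
  set q : H := v with hq
  have e1 : innA A (T p) q = (starRingEnd ℂ) lam * innA A (T u) v := by
    simp [hp, hq, innA, map_smul, inner_smul_left, mul_comm]
  have e2 : innA A (T q) p = lam * innA A (T v) u := by
    simp [hp, hq, innA, map_smul, inner_smul_right]
  have hsum : innA A (T (p + q)) (p + q) - innA A (T (p - q)) (p - q)
      = 2 * ((starRingEnd ℂ) lam * innA A (T u) v + lam * innA A (T v) u) := by
    rw [polar A T p q, e1, e2]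
  have hp1 : vnormA A p = 1 := by
    rw [hp, vnorm_smul A Q hQ, hl1, one_mul, hu]
  have hpar : vnormA A (p + q) ^ 2 + vnormA A (p - q) ^ 2 = 4 := by
    have hh := parallelogram_law_with_norm ℂ (Q p) (Q q)
    have g1 : vnormA A (p + q) = ‖Q p + Q q‖ := by rw [vnorm_eq A Q hQ, map_add]
    have g2 : vnormA A (p - q) = ‖Q p - Q q‖ := by rw [vnorm_eq A Q hQ, map_sub]
    have g3 : ‖Q p‖ = 1 := by rw [← vnorm_eq A Q hQ, hp1]
    have g4 : ‖Q q‖ = 1 := by rw [← vnorm_eq A Q hQ, hq, hv]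
    rw [g1, g2]
    simp only [pow_two] at hh ⊢
    rw [hh, g3, g4]
    norm_num
  have hD1 := wA_bound A T Q hA hQ hbdd (p + q)
  have hD2 := wA_bound A T Q hA hQ hbdd (p - q)
  have htri : ‖2 * ((starRingEnd ℂ) lam * innA A (T u) v + lam * innA A (T v) u)‖
      ≤ ‖innA A (T (p + q)) (p + q)‖ + ‖innA A (T (p - q)) (p - q)‖ := by
    rw [← hsum]
    simpa using
      norm_sub_le (innA A (T (p + q)) (p + q)) (innA A (T (p - q)) (p - q))
  have h2abs : ‖2 * ((starRingEnd ℂ) lam * innA A (T u) v + lam * innA A (T v) u)‖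
      = 2 * ‖(starRingEnd ℂ) lam * innA A (T u) v + lam * innA A (T v) u‖ := by
    rw [norm_mul]
    norm_num
  have hw := wA_nonneg A T
  rw [hl2]
  nlinarith [htri, hD1, hD2, hpar, h2abs]

lemma main_ineq (S : H →L[ℂ] H) (hA : StrictPos A)
    (hQ : ∀ x y : H, innA A x y = inner ℂ (Q x) (Q y)) (hT : IsAAdjoint A T S) :
    ∀ u v : H, ‖innA A (T u) v‖ + ‖innA A (T v) u‖
      ≤ 2 * wA A T * vnormA A u * vnormA A v := by
  have hbdd := wA_bdd A T Q S hA hQ hT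
  intro u v
  by_cases hu : u = 0
  · have e1 : innA A (T u) v = 0 := by simp [hu, innA]
    have e2 : innA A (T v) u = 0 := by simp [hu, innA]
    have e3 : vnormA A u = 0 := by simp [hu, vnormA, innA]
    rw [e1, e2, e3, norm_zero]
    simp
  by_cases hv : v = 0
  · have e1 : innA A (T u) v = 0 := by simp [hv, innA]
    have e2 : innA A (T v) u = 0 := by simp [hv, innA]
    have e3 : vnormA A v = 0 := by simp [hv, vnormA, innA]
    rw [e1, e2, e3, norm_zero]
    simp
  have hupos : 0 < vnormA A u := Real.sqrt_pos.2 (hA.2 u hu)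
  have hvpos : 0 < vnormA A v := Real.sqrt_pos.2 (hA.2 v hv)
  set cu : ℝ := (vnormA A u)⁻¹ with hcu
  set cv : ℝ := (vnormA A v)⁻¹ with hcv
  have hcupos : 0 < cu := inv_pos.2 hupos
  have hcvpos : 0 < cv := inv_pos.2 hvpos
  have hu1 : vnormA A ((cu : ℂ) • u) = 1 := by
    rw [vnorm_smul A Q hQ, Complex.norm_real, Real.norm_eq_abs, _root_.abs_of_pos hcupos, hcu]
    field_simp
  have hv1 : vnormA A ((cv : ℂ) • v) = 1 := by
    rw [vnorm_smul A Q hQ, Complex.norm_real, Real.norm_eq_abs, _root_.abs_of_pos hcvpos, hcv]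
    field_simp
  have h8 := unit_ineq A T Q hA hQ hbdd ((cu : ℂ) • u) ((cv : ℂ) • v) hu1 hv1
  have he1 : ‖innA A (T ((cu : ℂ) • u)) ((cv : ℂ) • v)‖
      = cu * cv * ‖innA A (T u) v‖ := by
    have h : innA A (T ((cu : ℂ) • u)) ((cv : ℂ) • v)
        = ((cu * cv : ℝ) : ℂ) * innA A (T u) v := by
      simp only [innA, map_smul, inner_smul_left, inner_smul_right, Complex.conj_ofReal]
      push_cast
      ring
    rw [h, norm_mul, Complex.norm_real, Real.norm_eq_abs, _root_.abs_of_pos (mul_pos hcupos hcvpos)]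
  have he2 : ‖innA A (T ((cv : ℂ) • v)) ((cu : ℂ) • u)‖
      = cu * cv * ‖innA A (T v) u‖ := by
    have h : innA A (T ((cv : ℂ) • v)) ((cu : ℂ) • u)
        = ((cu * cv : ℝ) : ℂ) * innA A (T v) u := by
      simp only [innA, map_smul, inner_smul_left, inner_smul_right, Complex.conj_ofReal]
      push_cast
      ring
    rw [h, norm_mul, Complex.norm_real, Real.norm_eq_abs, _root_.abs_of_pos (mul_pos hcupos hcvpos)]
  rw [he1, he2] at h8
  have h9 := mul_le_mul_of_nonneg_right h8 (le_of_lt (mul_pos hupos hvpos))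
  have h10 : (cu * cv * ‖innA A (T u) v‖ + cu * cv * ‖innA A (T v) u‖)
      * (vnormA A u * vnormA A v)
      = ‖innA A (T u) v‖ + ‖innA A (T v) u‖ := by
    rw [hcu, hcv]
    field_simp
  rw [h10] at h9
  calc ‖innA A (T u) v‖ + ‖innA A (T v) u‖
      ≤ 2 * wA A T * (vnormA A u * vnormA A v) := h9
    _ = 2 * wA A T * vnormA A u * vnormA A v := by ring

end core

theorem stmt18 (A X T Y X' Y' : H →L[ℂ] H) (hA : StrictPos A)
    (hX : IsAAdjoint A X X') (hY : IsAAdjoint A Y Y') (hT : ∃ S, IsAAdjoint A T S) :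
    ∀ x : H, ‖innA A ((X' * T * Y) x) x‖ + ‖innA A ((Y' * T * X) x) x‖ ≤
      2 * wA A T * vnormA A (X x) * vnormA A (Y x) := by
  obtain ⟨S, hS⟩ := hT
  obtain ⟨Q, hQ⟩ := exists_Q A hA.1
  intro x
  have e1 : innA A ((X' * T * Y) x) x = innA A (T (Y x)) (X x) := by
    have h0 : (X' * T * Y) x = X' (T (Y x)) := rfl
    have h1 : A (X' (T (Y x))) = (ContinuousLinearMap.adjoint X) (A (T (Y x))) :=
      DFunLike.congr_fun hX (T (Y x))
    rw [innA, innA, h0, h1, ContinuousLinearMap.adjoint_inner_left]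
  have e2 : innA A ((Y' * T * X) x) x = innA A (T (X x)) (Y x) := by
    have h0 : (Y' * T * X) x = Y' (T (X x)) := rfl
    have h1 : A (Y' (T (X x))) = (ContinuousLinearMap.adjoint Y) (A (T (X x))) :=
      DFunLike.congr_fun hY (T (X x))
    rw [innA, innA, h0, h1, ContinuousLinearMap.adjoint_inner_left]
  rw [e1, e2]
  have hmain := main_ineq A T Q S hA hQ hS (Y x) (X x)
  calc ‖innA A (T (Y x)) (X x)‖ + ‖innA A (T (X x)) (Y x)‖
      ≤ 2 * wA A T * vnormA A (Y x) * vnormA A (X x) := hmain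
    _ = 2 * wA A T * vnormA A (X x) * vnormA A (Y x) := by ring
end
end

section
/- Let A be a strictly positive operator on H and T ∈ B_A(H) with ‖T‖_A ≠ 0. Then w_A(T) ≥ (1/(2‖T‖_A))·max{‖T‖_A² + c_A(T²), m_A(T)² + w_A(T²)}, where c_A(S) = inf{|⟨Sx,x⟩_A| : ‖x‖_A=1} and m_A(T) = inf{‖Tx‖_A : ‖x‖_A = 1}. -/
noncomputable section
open Complex ContinuousLinearMap

variable {H : Type*} [NormedAddCommGroup H] [InnerProductSpace ℂ H] [CompleteSpace H]

namespace S19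

lemma innA_add_left (A : H →L[ℂ] H) (x y z : H) : innA A (x + y) z = innA A x z + innA A y z := by
  unfold innA; rw [map_add, inner_add_left]

lemma innA_add_right (A : H →L[ℂ] H) (x y z : H) : innA A x (y + z) = innA A x y + innA A x z :=
  inner_add_right _ _ _

lemma innA_sub_left (A : H →L[ℂ] H) (x y z : H) : innA A (x - y) z = innA A x z - innA A y z := by
  unfold innA; rw [map_sub, inner_sub_left]

lemma innA_sub_right (A : H →L[ℂ] H) (x y z : H) : innA A x (y - z) = innA A x y - innA A x z :=
  inner_sub_right _ _ _

lemma innA_smul_left (A : H →L[ℂ] H) (c : ℂ) (x y : H) :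
    innA A (c • x) y = (starRingEnd ℂ) c * innA A x y := by
  unfold innA; rw [map_smul, inner_smul_left]

lemma innA_smul_right (A : H →L[ℂ] H) (c : ℂ) (x y : H) : innA A x (c • y) = c * innA A x y :=
  inner_smul_right _ _ _

lemma innA_conj (A : H →L[ℂ] H) (hA : IsSelfAdjoint A) (x y : H) :
    (starRingEnd ℂ) (innA A x y) = innA A y x := by
  unfold innA
  rw [inner_conj_symm]
  exact (hA.isSymmetric y x).symm

lemma innA_self_re_nonneg {A : H →L[ℂ] H} (hA : A.IsPositive) (x : H) : 0 ≤ (innA A x x).re := by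
  have := hA.re_inner_nonneg_left x
  simpa [ContinuousLinearMap.reApplyInnerSelf, innA] using this

lemma vnormA_nonneg (A : H →L[ℂ] H) (x : H) : 0 ≤ vnormA A x := Real.sqrt_nonneg _

lemma vnormA_sq {A : H →L[ℂ] H} (hA : A.IsPositive) (x : H) :
    vnormA A x ^ 2 = (innA A x x).re := Real.sq_sqrt (innA_self_re_nonneg hA x)

lemma vnormA_pos {A : H →L[ℂ] H} (hA : StrictPos A) {x : H} (hx : x ≠ 0) : 0 < vnormA A x :=
  Real.sqrt_pos.mpr (hA.2 x hx)

lemma vnormA_zero (A : H →L[ℂ] H) : vnormA A (0 : H) = 0 := by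
  simp [vnormA, innA]

lemma vnormA_smul (A : H →L[ℂ] H) (c : ℂ) (x : H) :
    vnormA A (c • x) = ‖c‖ * vnormA A x := by
  unfold vnormA
  rw [innA_smul_left, innA_smul_right, ← mul_assoc]
  have h1 : (starRingEnd ℂ) c * c = ((‖c‖ ^ 2 : ℝ) : ℂ) := by
    rw [mul_comm, Complex.mul_conj]
    norm_cast
    rw [Complex.sq_norm]
  rw [h1, Complex.re_ofReal_mul, Real.sqrt_mul (sq_nonneg _), Real.sqrt_sq (norm_nonneg c)]

lemma innA_expand_add (A : H →L[ℂ] H) (hA : IsSelfAdjoint A) (x w : H) :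
    (innA A (x + w) (x + w)).re
      = (innA A x x).re + 2 * (innA A x w).re + (innA A w w).re := by
  rw [innA_add_left, innA_add_right, innA_add_right]
  have h : (innA A w x).re = (innA A x w).re := by
    rw [← innA_conj A hA x w, Complex.conj_re]
  simp only [Complex.add_re]
  rw [h]; ring

lemma innA_expand_sub (A : H →L[ℂ] H) (hA : IsSelfAdjoint A) (x w : H) :
    (innA A (x - w) (x - w)).re
      = (innA A x x).re - 2 * (innA A x w).re + (innA A w w).re := by
  rw [innA_sub_left, innA_sub_right, innA_sub_right]
  have h : (innA A w x).re = (innA A x w).re := by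
    rw [← innA_conj A hA x w, Complex.conj_re]
  simp only [Complex.sub_re]
  rw [h]; ring

lemma parallelogramA {A : H →L[ℂ] H} (hA : A.IsPositive) (x w : H) :
    vnormA A (x + w) ^ 2 + vnormA A (x - w) ^ 2
      = 2 * vnormA A x ^ 2 + 2 * vnormA A w ^ 2 := by
  rw [vnormA_sq hA, vnormA_sq hA, vnormA_sq hA, vnormA_sq hA,
    innA_expand_add A hA.isSelfAdjoint, innA_expand_sub A hA.isSelfAdjoint]
  ring

/-- Cauchy–Schwarz for the A-inner product. -/
lemma innA_cs {A : H →L[ℂ] H} (hA : StrictPos A) (x y : H) :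
    ‖innA A x y‖ ≤ vnormA A x * vnormA A y := by
  rcases eq_or_ne y 0 with rfl | hy
  · simp only [innA, inner_zero_right, map_zero, norm_zero]
    exact mul_nonneg (vnormA_nonneg A x) (vnormA_nonneg A 0)
  · set d := ‖innA A x y‖ with hd
    set a := vnormA A x
    set b := vnormA A y
    have hb : 0 < b := vnormA_pos hA hy
    have ha : 0 ≤ a := vnormA_nonneg A x
    rcases eq_or_ne (innA A x y) 0 with h0 | h0
    · rw [hd, h0, norm_zero]; positivity
    · obtain ⟨φ, hφ1, hφ2⟩ : ∃ φ : ℂ, ‖φ‖ = 1 ∧ innA A x (φ • y) = (d : ℂ) := by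
        refine ⟨(starRingEnd ℂ) (innA A x y) / d, ?_, ?_⟩
        · rw [norm_div, Complex.norm_conj, Complex.norm_real, Real.norm_eq_abs, abs_of_pos]
          · rw [div_self (by simpa [hd] using h0)]
          · exact (norm_pos_iff.mpr h0)
        · rw [innA_smul_right, div_mul_eq_mul_div, mul_comm ((starRingEnd ℂ) _) _,
            Complex.mul_conj, Complex.normSq_eq_norm_sq]
          have hdne : (d : ℂ) ≠ 0 := by
            simpa [hd] using (Complex.ofReal_ne_zero.mpr (ne_of_gt (norm_pos_iff.mpr h0)))
          rw [div_eq_iff hdne]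
          norm_cast
          rw [hd, sq]
      have hquad : ∀ t : ℝ, 0 ≤ b ^ 2 * (t * t) + 2 * d * t + a ^ 2 := by
        intro t
        have h1 := innA_self_re_nonneg hA.1 (x + (t : ℂ) • (φ • y))
        have h2 := innA_expand_add A hA.1.isSelfAdjoint x ((t : ℂ) • (φ • y))
        have h3 : (innA A x ((t : ℂ) • (φ • y))).re = t * d := by
          rw [innA_smul_right, hφ2]
          simp
        have h4 : (innA A ((t : ℂ) • (φ • y)) ((t : ℂ) • (φ • y))).re
            = t ^ 2 * b ^ 2 := by
          have : vnormA A ((t : ℂ) • (φ • y)) = |t| * b := by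
            rw [vnormA_smul, vnormA_smul, Complex.norm_real, Real.norm_eq_abs, hφ1, one_mul]
          have h5 := vnormA_sq hA.1 ((t : ℂ) • (φ • y))
          rw [this] at h5
          rw [← h5, mul_pow, _root_.sq_abs]
        rw [h2, h3, h4] at h1
        rw [← vnormA_sq hA.1 x] at h1
        nlinarith [h1]
      have hdisc := discrim_le_zero hquad
      rw [discrim] at hdisc
      have hd0 : 0 ≤ d := norm_nonneg _
      nlinarith [hdisc, hd0, ha, hb.le, mul_nonneg ha hb.le]


lemma selfadj_bound {A S' : H →L[ℂ] H} (hA : StrictPos A)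
    (hH : ∀ u v, (starRingEnd ℂ) (innA A (S' u) v) = innA A (S' v) u)
    {K : ℝ} (hK : 0 ≤ K)
    (hb : ∀ u, |(innA A (S' u) u).re| ≤ K * vnormA A u ^ 2)
    {x : H} (hx : vnormA A x = 1) : vnormA A (S' x) ≤ K := by
  have step : ∀ u v : H, (innA A (S' u) v).re ≤ K / 2 * (vnormA A u ^ 2 + vnormA A v ^ 2) := by
    intro u v
    have pol : 4 * (innA A (S' u) v).re
        = (innA A (S' (u + v)) (u + v)).re - (innA A (S' (u - v)) (u - v)).re := by
      have e1 : S' (u + v) = S' u + S' v := map_add _ _ _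
      have e2 : S' (u - v) = S' u - S' v := map_sub _ _ _
      rw [e1, e2, innA_add_left, innA_sub_left, innA_add_right, innA_add_right,
        innA_sub_right, innA_sub_right]
      have h : (innA A (S' v) u).re = (innA A (S' u) v).re := by
        rw [← hH u v, Complex.conj_re]
      simp only [Complex.add_re, Complex.sub_re]
      rw [h]; ring
    have hb1 := hb (u + v)
    have hb2 := hb (u - v)
    have par := parallelogramA hA.1 u v
    have l1 : (innA A (S' (u + v)) (u + v)).re ≤ K * vnormA A (u + v) ^ 2 :=
      le_trans (le_abs_self _) hb1
    have l2 : -(K * vnormA A (u - v) ^ 2) ≤ (innA A (S' (u - v)) (u - v)).re := by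
      have := neg_abs_le ((innA A (S' (u - v)) (u - v)).re)
      linarith
    have hKpar : K * (vnormA A (u + v) ^ 2 + vnormA A (u - v) ^ 2)
        = K * (2 * vnormA A u ^ 2 + 2 * vnormA A v ^ 2) := by rw [par]
    linarith
  set y := S' x with hy
  rcases eq_or_ne y 0 with h0 | h0
  · rw [h0, vnormA_zero]; exact hK
  · have hyp : 0 < vnormA A y := vnormA_pos hA h0
    set t := Real.sqrt (vnormA A y) with ht
    have htp : 0 < t := Real.sqrt_pos.mpr hyp
    have ht2 : t ^ 2 = vnormA A y := Real.sq_sqrt hyp.le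
    have key := step ((t : ℂ) • x) (((t⁻¹ : ℝ) : ℂ) • y)
    have e1 : S' ((t : ℂ) • x) = (t : ℂ) • y := by rw [map_smul, hy]
    have lhs : (innA A (S' ((t : ℂ) • x)) (((t⁻¹ : ℝ) : ℂ) • y)).re = vnormA A y ^ 2 := by
      rw [e1, innA_smul_left, innA_smul_right, Complex.conj_ofReal, ← mul_assoc]
      have : ((t : ℂ)) * ((t⁻¹ : ℝ) : ℂ) = 1 := by
        rw [← Complex.ofReal_mul, mul_inv_cancel₀ htp.ne', Complex.ofReal_one]
      rw [this, one_mul, ← vnormA_sq hA.1]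
    have r1 : vnormA A ((t : ℂ) • x) ^ 2 = t ^ 2 := by
      rw [vnormA_smul, Complex.norm_real, Real.norm_eq_abs, abs_of_pos htp, hx, mul_one]
    have r2 : vnormA A (((t⁻¹ : ℝ) : ℂ) • y) ^ 2 = (t⁻¹) ^ 2 * vnormA A y ^ 2 := by
      rw [vnormA_smul, Complex.norm_real, Real.norm_eq_abs, abs_of_pos (inv_pos.mpr htp), mul_pow]
    rw [lhs, r1, r2] at key
    have hti : (t⁻¹) ^ 2 * vnormA A y ^ 2 = vnormA A y := by
      rw [inv_pow, ← ht2]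
      field_simp
    rw [ht2, hti] at key
    nlinarith [key, hyp]

end S19

theorem stmt19 (A T : H →L[ℂ] H) (hA : StrictPos A) (hT : ∃ S, IsAAdjoint A T S)
    (hne : opNormA' A T ≠ 0) :
    (1 / (2 * opNormA' A T)) *
        max ((opNormA' A T)^2 + cA A (T^2)) ((mA A T)^2 + wA A (T^2)) ≤ wA A T := by
  obtain ⟨S, hS⟩ := hT
  have hApos := hA.1
  have hAsa : IsSelfAdjoint A := hApos.isSelfAdjoint
  have r1 : ∀ u v : H, innA A (S u) v = innA A u (T v) := by
    intro u v
    have h1 : A (S u) = (ContinuousLinearMap.adjoint T) (A u) := by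
      have := congrArg (fun L : H →L[ℂ] H => L u) hS
      simpa using this
    show inner ℂ (A (S u)) v = inner ℂ (A u) (T v)
    rw [h1]
    exact ContinuousLinearMap.adjoint_inner_left T v (A u)
  have r2 : ∀ u v : H, innA A (T u) v = innA A u (S v) := by
    intro u v
    have h := congrArg (starRingEnd ℂ) (r1 v u)
    rw [S19.innA_conj A hAsa, S19.innA_conj A hAsa] at h
    exact h.symm
  have hNdef : opNormA' A T
      = sSup {r : ℝ | ∃ x : H, vnormA A x = 1 ∧ r = vnormA A (T x)} := rfl
  have hSNne : {r : ℝ | ∃ x : H, vnormA A x = 1 ∧ r = vnormA A (T x)}.Nonempty := by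
    by_contra h
    rw [Set.not_nonempty_iff_eq_empty] at h
    exact hne (by rw [hNdef, h, Real.sSup_empty])
  have hSNbdd : BddAbove {r : ℝ | ∃ x : H, vnormA A x = 1 ∧ r = vnormA A (T x)} := by
    by_contra h
    exact hne (by rw [hNdef, Real.sSup_of_not_bddAbove h])
  obtain ⟨x0, hx0⟩ : ∃ x : H, vnormA A x = 1 := by
    obtain ⟨r, x, hx, -⟩ := hSNne; exact ⟨x, hx⟩
  have hTle : ∀ x : H, vnormA A x = 1 → vnormA A (T x) ≤ opNormA' A T := fun x hx =>
    hNdef ▸ le_csSup hSNbdd ⟨x, hx, rfl⟩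
  have hN0 : 0 ≤ opNormA' A T := le_trans (S19.vnormA_nonneg A (T x0)) (hTle x0 hx0)
  have hNpos : 0 < opNormA' A T := hN0.lt_of_ne (Ne.symm hne)
  have hWdef : wA A T
      = sSup {r : ℝ | ∃ x : H, vnormA A x = 1 ∧ r = ‖innA A (T x) x‖} := rfl
  have hSWbdd :
      BddAbove {r : ℝ | ∃ x : H, vnormA A x = 1 ∧ r = ‖innA A (T x) x‖} := by
    refine ⟨opNormA' A T, ?_⟩
    rintro r ⟨x, hx, rfl⟩
    calc ‖innA A (T x) x‖ ≤ vnormA A (T x) * vnormA A x := S19.innA_cs hA _ _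
      _ = vnormA A (T x) := by rw [hx, mul_one]
      _ ≤ opNormA' A T := hTle x hx
  have hWle : ∀ x : H, vnormA A x = 1 → ‖innA A (T x) x‖ ≤ wA A T := fun x hx =>
    hWdef ▸ le_csSup hSWbdd ⟨x, hx, rfl⟩
  have hW0 : 0 ≤ wA A T := le_trans (norm_nonneg _) (hWle x0 hx0)
  have hWscale : ∀ u : H, ‖innA A (T u) u‖ ≤ wA A T * vnormA A u ^ 2 := by
    intro u
    rcases eq_or_ne u 0 with rfl | hu
    · simp [innA, S19.vnormA_zero]
    · have ht : 0 < vnormA A u := S19.vnormA_pos hA hu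
      set s := vnormA A u with hs
      have hx1 : vnormA A (((s⁻¹ : ℝ) : ℂ) • u) = 1 := by
        rw [S19.vnormA_smul, Complex.norm_real, Real.norm_eq_abs, abs_of_pos (inv_pos.mpr ht), ← hs,
          inv_mul_cancel₀ ht.ne']
      have h2 := hWle _ hx1
      have h3 : innA A (T (((s⁻¹ : ℝ) : ℂ) • u)) (((s⁻¹ : ℝ) : ℂ) • u)
          = (((s⁻¹ ^ 2 : ℝ)) : ℂ) * innA A (T u) u := by
        rw [map_smul, S19.innA_smul_left, S19.innA_smul_right, Complex.conj_ofReal,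
          ← mul_assoc]
        push_cast
        ring
      rw [h3, norm_mul, Complex.norm_real, Real.norm_eq_abs, _root_.abs_of_nonneg (sq_nonneg s⁻¹)] at h2
      have h4 := mul_le_mul_of_nonneg_left h2 (by positivity : (0:ℝ) ≤ s ^ 2)
      calc ‖innA A (T u) u‖
          = s ^ 2 * (s⁻¹ ^ 2 * ‖innA A (T u) u‖) := by
            field_simp
        _ ≤ s ^ 2 * wA A T := h4
        _ = wA A T * s ^ 2 := by ring
  -- KEY POINTWISE INEQUALITY
  have key : ∀ x : H, vnormA A x = 1 →
      vnormA A (T x) ^ 2 + ‖innA A ((T ^ 2) x) x‖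
        ≤ 2 * opNormA' A T * wA A T := by
    intro x hx
    have hTTx : (T ^ 2) x = T (T x) := by rw [sq]; rfl
    have hc2 : innA A ((T ^ 2) x) x = innA A (T x) (S x) := by
      rw [hTTx]; exact r2 (T x) x
    set c2 := innA A (T x) (S x) with hc2'
    set d := ‖c2‖ with hd
    obtain ⟨μ, hμ1, hμ2⟩ : ∃ μ : ℂ, ‖μ‖ = 1 ∧ μ * c2 = (d : ℂ) := by
      rcases eq_or_ne c2 0 with h | h
      · exact ⟨1, by simp, by simp [hd, h]⟩
      · have hdpos : 0 < d := norm_pos_iff.mpr h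
        have hdne : (d : ℂ) ≠ 0 := Complex.ofReal_ne_zero.mpr hdpos.ne'
        refine ⟨(starRingEnd ℂ) c2 / (d : ℂ), ?_, ?_⟩
        · rw [norm_div, Complex.norm_conj, Complex.norm_real, Real.norm_eq_abs, abs_of_pos hdpos, ← hd,
            div_self hdpos.ne']
        · rw [div_mul_eq_mul_div, mul_comm ((starRingEnd ℂ) c2) c2, Complex.mul_conj,
            Complex.normSq_eq_norm_sq, div_eq_iff hdne]
          norm_cast
          rw [hd, sq]
    obtain ⟨l, hl1, hl2⟩ : ∃ l : ℂ, ‖l‖ = 1 ∧ l ^ 2 = μ := by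
      refine ⟨Complex.exp ((μ.arg / 2 : ℝ) * Complex.I),
        Complex.norm_exp_ofReal_mul_I _, ?_⟩
      rw [sq, ← Complex.exp_add]
      have he : ((μ.arg / 2 : ℝ) : ℂ) * Complex.I + ((μ.arg / 2 : ℝ) : ℂ) * Complex.I
          = ((μ.arg : ℝ) : ℂ) * Complex.I := by
        push_cast; ring
      rw [he]
      have h := Complex.norm_mul_exp_arg_mul_I μ
      rw [hμ1] at h
      simpa using h
    set S' : H →L[ℂ] H := (starRingEnd ℂ) l • T + l • S with hS'def
    have hS'app : ∀ u, S' u = (starRingEnd ℂ) l • T u + l • S u := fun u => rfl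
    have hconjl : (starRingEnd ℂ) l * l = 1 := by
      rw [mul_comm, Complex.mul_conj, Complex.normSq_eq_norm_sq, hl1]; norm_num
    have expand : ∀ u v, innA A (S' u) v
        = l * innA A (T u) v + (starRingEnd ℂ) l * innA A (S u) v := by
      intro u v
      rw [hS'app u, S19.innA_add_left, S19.innA_smul_left, S19.innA_smul_left,
        Complex.conj_conj]
    have hH : ∀ u v, (starRingEnd ℂ) (innA A (S' u) v) = innA A (S' v) u := by
      intro u v
      rw [expand u v, expand v u, map_add, map_mul, map_mul, Complex.conj_conj,
        S19.innA_conj A hAsa (T u) v, S19.innA_conj A hAsa (S u) v, ← r1 v u, ← r2 v u]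
      ring
    have hb : ∀ u, |(innA A (S' u) u).re| ≤ (2 * wA A T) * vnormA A u ^ 2 := by
      intro u
      have e1 : innA A (S u) u = (starRingEnd ℂ) (innA A (T u) u) := by
        rw [r1 u u]
        exact (S19.innA_conj A hAsa (T u) u).symm
      set c := innA A (T u) u with hcdef
      have e2 : innA A (S' u) u = l * c + (starRingEnd ℂ) (l * c) := by
        rw [expand u u, e1, ← map_mul]
      have e3 : (innA A (S' u) u).re = 2 * (l * c).re := by
        rw [e2, Complex.add_re, Complex.conj_re]; ring
      rw [e3]
      have h5 := hWscale u
      have h6 : |(l * c).re| ≤ ‖l * c‖ := Complex.abs_re_le_norm _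
      have h7 : ‖l * c‖ = ‖c‖ := by rw [norm_mul, hl1, one_mul]
      calc |2 * (l * c).re| = 2 * |(l * c).re| := by rw [abs_mul]; norm_num
        _ ≤ 2 * ‖c‖ := by rw [← h7]; linarith
        _ ≤ 2 * (wA A T * vnormA A u ^ 2) := by linarith
        _ = (2 * wA A T) * vnormA A u ^ 2 := by ring
    have hS'x : vnormA A (S' x) ≤ 2 * wA A T :=
      S19.selfadj_bound hA hH (by linarith : (0:ℝ) ≤ 2 * wA A T) hb hx
    have hvec : T x + μ • S x = l • S' x := by
      rw [hS'app x, smul_add, smul_smul, smul_smul, mul_comm l ((starRingEnd ℂ) l),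
        hconjl, one_smul, ← sq, hl2]
    have hnorm_y : vnormA A (T x + μ • S x) ≤ 2 * wA A T := by
      rw [hvec, S19.vnormA_smul, hl1, one_mul]; exact hS'x
    have hsum : vnormA A (T x) ^ 2 + d = (innA A (T x) (T x + μ • S x)).re := by
      rw [S19.innA_add_right, S19.innA_smul_right, Complex.add_re, ← hc2', hμ2,
        S19.vnormA_sq hApos]
      simp
    have hcs : (innA A (T x) (T x + μ • S x)).re
        ≤ vnormA A (T x) * vnormA A (T x + μ • S x) :=
      le_trans (Complex.re_le_norm _) (S19.innA_cs hA _ _)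
    have habs : ‖innA A ((T ^ 2) x) x‖ = d := by rw [hc2]
    rw [habs]
    calc vnormA A (T x) ^ 2 + d = (innA A (T x) (T x + μ • S x)).re := hsum
      _ ≤ vnormA A (T x) * vnormA A (T x + μ • S x) := hcs
      _ ≤ opNormA' A T * (2 * wA A T) :=
          mul_le_mul (hTle x hx) hnorm_y (S19.vnormA_nonneg _ _) hN0
      _ = 2 * opNormA' A T * wA A T := by ring
  -- assembling
  have hcdef : cA A (T ^ 2)
      = sInf {r : ℝ | ∃ x : H, vnormA A x = 1 ∧ r = ‖innA A ((T ^ 2) x) x‖} := rfl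
  have hSCbdd :
      BddBelow {r : ℝ | ∃ x : H, vnormA A x = 1 ∧ r = ‖innA A ((T ^ 2) x) x‖} :=
    ⟨0, by rintro r ⟨x, hx, rfl⟩; exact norm_nonneg _⟩
  have hcle : ∀ x : H, vnormA A x = 1 →
      cA A (T ^ 2) ≤ ‖innA A ((T ^ 2) x) x‖ :=
    fun x hx => hcdef ▸ csInf_le hSCbdd ⟨x, hx, rfl⟩
  have hmdef : mA A T
      = sInf {r : ℝ | ∃ x : H, vnormA A x = 1 ∧ r = vnormA A (T x)} := rfl
  have hSNbddb : BddBelow {r : ℝ | ∃ x : H, vnormA A x = 1 ∧ r = vnormA A (T x)} :=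
    ⟨0, by rintro r ⟨x, hx, rfl⟩; exact S19.vnormA_nonneg _ _⟩
  have hmle : ∀ x : H, vnormA A x = 1 → mA A T ≤ vnormA A (T x) :=
    fun x hx => hmdef ▸ csInf_le hSNbddb ⟨x, hx, rfl⟩
  have hm0 : 0 ≤ mA A T := hmdef ▸ le_csInf hSNne
    (by rintro r ⟨x, hx, rfl⟩; exact S19.vnormA_nonneg _ _)
  have hfirst : (opNormA' A T) ^ 2 + cA A (T ^ 2) ≤ 2 * opNormA' A T * wA A T := by
    have hz : 0 ≤ 2 * opNormA' A T * wA A T - cA A (T ^ 2) := by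
      have h1 := key x0 hx0
      have h2 := hcle x0 hx0
      nlinarith [S19.vnormA_nonneg A (T x0)]
    have hle : opNormA' A T ≤ Real.sqrt (2 * opNormA' A T * wA A T - cA A (T ^ 2)) := by
      rw [hNdef]
      apply Real.sSup_le _ (Real.sqrt_nonneg _)
      rintro r ⟨x, hx, rfl⟩
      apply (Real.le_sqrt (S19.vnormA_nonneg A (T x)) hz).mpr
      have h1 := key x hx
      have h2 := hcle x hx
      linarith
    have := (Real.le_sqrt hN0 hz).mp hle
    linarith
  have hsecond : (mA A T) ^ 2 + wA A (T ^ 2) ≤ 2 * opNormA' A T * wA A T := by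
    have hw2 : wA A (T ^ 2) ≤ 2 * opNormA' A T * wA A T - (mA A T) ^ 2 := by
      apply Real.sSup_le
      · rintro r ⟨x, hx, rfl⟩
        have h1 := key x hx
        have h2 := hmle x hx
        have h3 : (mA A T) ^ 2 ≤ vnormA A (T x) ^ 2 := pow_le_pow_left₀ hm0 h2 2
        linarith
      · have h1 := key x0 hx0
        have h2 := hmle x0 hx0
        have h3 : (mA A T) ^ 2 ≤ vnormA A (T x0) ^ 2 := pow_le_pow_left₀ hm0 h2 2
        have h4 := norm_nonneg (innA A ((T ^ 2) x0) x0)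
        linarith
    linarith
  have hmax : max ((opNormA' A T) ^ 2 + cA A (T ^ 2)) ((mA A T) ^ 2 + wA A (T ^ 2))
      ≤ 2 * opNormA' A T * wA A T := max_le hfirst hsecond
  rw [one_div, inv_mul_le_iff₀ (by positivity : (0:ℝ) < 2 * opNormA' A T)]
  calc max ((opNormA' A T) ^ 2 + cA A (T ^ 2)) ((mA A T) ^ 2 + wA A (T ^ 2))
      ≤ 2 * opNormA' A T * wA A T := hmax
    _ = 2 * opNormA' A T * wA A T := rfl
end
end
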